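/- arXiv:1412.4106 — 4 statements merged into one kernel-verified Lean document; each statement's English description precedes it below -/
import Mathlib

section
/- Let H : ℝ² → ℝ be the hairpin solution defined on Ω₁ = {z ∈ ℂ : |Re z| < π/2 + cosh(Im z)} by H(z) = Re(cosh(φ⁻¹(z))) where φ(ζ) = i(ζ + sinh ζ) maps the strip S = {|Im ζ| < π/2} conformally onto Ω₁. Then for ζ = y₁ + i y₂ ∈ S, the gradient satisfies |∇H|(φ(ζ)) = √(sinh² y₁ + sin² y₂) / (cosh y₁ + cos y₂). -/
open Complex

lemma abs_sinh_eq (x y : ℝ) :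
    ‖Complex.sinh (x + y * I)‖ =
      Real.sqrt (Real.sinh x ^ 2 + Real.sin y ^ 2) := by
  have h : Complex.sinh (x + y * I) =
      (Real.sinh x * Real.cos y : ℝ) + (Real.cosh x * Real.sin y : ℝ) * I := by
    rw [Complex.sinh_add, Complex.sinh_mul_I, Complex.cosh_mul_I]
    push_cast
    ring
  rw [h, Complex.norm_def, Complex.normSq_add_mul_I]
  congr 1
  have h1 := Real.sin_sq_add_cos_sq y
  have h2 := Real.cosh_sq x
  nlinarith [Real.sinh_sq x]

lemma abs_one_add_cosh_eq (x y : ℝ) (hy : Real.cos y > 0) :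
    ‖1 + Complex.cosh (x + y * I)‖ = Real.cosh x + Real.cos y := by
  have h : (1 : ℂ) + Complex.cosh (x + y * I) =
      (1 + Real.cosh x * Real.cos y : ℝ) + (Real.sinh x * Real.sin y : ℝ) * I := by
    rw [Complex.cosh_add, Complex.cosh_mul_I, Complex.sinh_mul_I]
    push_cast
    ring
  have hpos : 0 < Real.cosh x + Real.cos y := by positivity
  rw [h, Complex.norm_def, Complex.normSq_add_mul_I]
  rw [show (1 + Real.cosh x * Real.cos y) ^ 2 + (Real.sinh x * Real.sin y) ^ 2
      = (Real.cosh x + Real.cos y) ^ 2 by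
    have h1 := Real.sin_sq_add_cos_sq y
    have h2 := Real.cosh_sq x
    nlinarith [Real.sinh_sq x]]
  exact Real.sqrt_sq hpos.le

lemma hasGradientAt_re_comp {V : ℂ → ℂ} {c z : ℂ} (h : HasDerivAt V c z) :
    HasGradientAt (fun w => (V w).re) ((starRingEnd ℂ) c) z := by
  rw [hasGradientAt_iff_hasFDerivAt]
  have h2 := (Complex.reCLM.hasFDerivAt).comp z (h.hasFDerivAt.restrictScalars ℝ)
  refine h2.congr_fderiv ?_
  refine ContinuousLinearMap.ext fun v => ?_
  rw [InnerProductSpace.toDual_apply_apply, Complex.inner]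
  simp [mul_comm]

/-- Gradient formula for the hairpin solution: if `φ(ζ) = i(ζ + sinh ζ)` maps
the strip `S = {|Im ζ| < π/2}` into `Ω₁ = {|Re z| < π/2 + cosh (Im z)}`, `V` is holomorphic
on `Ω₁` with `V ∘ φ = cosh` on `S`, and `H = Re V`, then for `ζ = y₁ + i y₂ ∈ S`,
`|∇H|(φ(ζ)) = √(sinh² y₁ + sin² y₂) / (cosh y₁ + cos y₂)`. -/
theorem hairpin_gradient_formula
    (S : Set ℂ) (hS : S = {ζ : ℂ | |ζ.im| < Real.pi / 2})
    (Ω₁ : Set ℂ) (hΩ : Ω₁ = {z : ℂ | |z.re| < Real.pi / 2 + Real.cosh z.im})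
    (φ : ℂ → ℂ) (hφ : ∀ ζ, φ ζ = I * (ζ + Complex.sinh ζ))
    (hmaps : Set.MapsTo φ S Ω₁)
    (V : ℂ → ℂ) (hV : DifferentiableOn ℂ V Ω₁)
    (hVφ : ∀ ζ ∈ S, V (φ ζ) = Complex.cosh ζ)
    (H : ℂ → ℝ) (hH : ∀ z, H z = (V z).re) :
    ∀ ζ ∈ S,
      ‖gradient H (φ ζ)‖ =
        Real.sqrt (Real.sinh ζ.re ^ 2 + Real.sin ζ.im ^ 2) /
          (Real.cosh ζ.re + Real.cos ζ.im) := by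
  intro ζ hζ
  have hHf : H = fun z => (V z).re := funext hH
  subst hHf
  -- open sets
  have hSopen : IsOpen S := by
    rw [hS]; exact isOpen_lt (continuous_abs.comp Complex.continuous_im) continuous_const
  have hΩopen : IsOpen Ω₁ := by
    rw [hΩ]
    exact isOpen_lt (continuous_abs.comp Complex.continuous_re)
      (continuous_const.add (Real.continuous_cosh.comp Complex.continuous_im))
  have hzΩ : φ ζ ∈ Ω₁ := hmaps hζ
  have hVd : DifferentiableAt ℂ V (φ ζ) := hV.differentiableAt (hΩopen.mem_nhds hzΩ)
  set c := deriv V (φ ζ) with hc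
  have hcd : HasDerivAt V c (φ ζ) := hVd.hasDerivAt
  -- derivative of φ
  have hφd : HasDerivAt φ (I * (1 + Complex.cosh ζ)) ζ := by
    have : HasDerivAt (fun w => I * (w + Complex.sinh w)) (I * (1 + Complex.cosh ζ)) ζ :=
      ((hasDerivAt_id ζ).add (Complex.hasDerivAt_sinh ζ)).const_mul I
    exact this.congr_of_eventuallyEq (Filter.Eventually.of_forall hφ)
  -- chain rule & congruence with cosh
  have hcomp : HasDerivAt (V ∘ φ) (c * (I * (1 + Complex.cosh ζ))) ζ := hcd.comp ζ hφd
  have hcosh : HasDerivAt (V ∘ φ) (Complex.sinh ζ) ζ := by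
    refine (Complex.hasDerivAt_cosh ζ).congr_of_eventuallyEq ?_
    filter_upwards [hSopen.mem_nhds hζ] with w hw
    exact hVφ w hw
  have hkey : c * (I * (1 + Complex.cosh ζ)) = Complex.sinh ζ := hcomp.unique hcosh
  -- trigonometric facts
  have hy : |ζ.im| < Real.pi / 2 := by rw [hS] at hζ; exact hζ
  have hcos : Real.cos ζ.im > 0 := Real.cos_pos_of_mem_Ioo (abs_lt.mp hy |> fun h => ⟨h.1, h.2⟩)
  have hζeq : (ζ : ℂ) = (ζ.re : ℝ) + (ζ.im : ℝ) * I := (Complex.re_add_im ζ).symm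
  have habs1 : ‖1 + Complex.cosh ζ‖ = Real.cosh ζ.re + Real.cos ζ.im := by
    conv_lhs => rw [hζeq]
    exact abs_one_add_cosh_eq ζ.re ζ.im hcos
  have habs2 : ‖Complex.sinh ζ‖ =
      Real.sqrt (Real.sinh ζ.re ^ 2 + Real.sin ζ.im ^ 2) := by
    conv_lhs => rw [hζeq]
    exact abs_sinh_eq ζ.re ζ.im
  have hpos : 0 < Real.cosh ζ.re + Real.cos ζ.im := by positivity
  -- gradient
  have hgrad := (hasGradientAt_re_comp hcd).gradient
  rw [hgrad]
  have : ‖(starRingEnd ℂ) c‖ = ‖c‖ := RCLike.norm_conj c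
  rw [this]
  have hnc : ‖c‖ * (Real.cosh ζ.re + Real.cos ζ.im) =
      Real.sqrt (Real.sinh ζ.re ^ 2 + Real.sin ζ.im ^ 2) := by
    calc ‖c‖ * (Real.cosh ζ.re + Real.cos ζ.im)
        = ‖c * (I * (1 + Complex.cosh ζ))‖ := by
          rw [norm_mul, norm_mul, Complex.norm_I, one_mul, habs1]
      _ = _ := by rw [hkey, habs2]
  field_simp [hpos.ne'] at hnc ⊢
  linarith [hnc]
end

section
/- The function V(z) = cosh(φ⁻¹(z)), with φ(ζ) = i(ζ + sinh ζ), maps each of the half-domains Ω₁⁺ = Ω₁ ∩ {Im z > 0} and Ω₁⁻ = Ω₁ ∩ {Im z < 0} injectively into the slit right half-plane {ξ : Re ξ > 0} \ (0, 1]. -/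
open Complex

lemma my_cosh_eq (z : ℂ) :
    Complex.cosh z = (Real.cosh z.re * Real.cos z.im : ℝ) +
      (Real.sinh z.re * Real.sin z.im : ℝ) * I := by
  conv_lhs => rw [← re_add_im z]
  rw [Complex.cosh_add, Complex.cosh_mul_I, Complex.sinh_mul_I,
    ← Complex.ofReal_cosh, ← Complex.ofReal_sinh, ← Complex.ofReal_cos, ← Complex.ofReal_sin]
  push_cast
  ring

lemma my_cosh_re (z : ℂ) : (Complex.cosh z).re = Real.cosh z.re * Real.cos z.im := by
  rw [my_cosh_eq]
  simp [Complex.cos_ofReal_re, Complex.cosh_ofReal_re, Complex.sin_ofReal_im,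
    Complex.sinh_ofReal_im, Complex.cos_ofReal_im, Complex.cosh_ofReal_im,
    Complex.sin_ofReal_re, Complex.sinh_ofReal_re]

lemma my_cosh_im (z : ℂ) : (Complex.cosh z).im = Real.sinh z.re * Real.sin z.im := by
  rw [my_cosh_eq]
  simp [Complex.cos_ofReal_re, Complex.cosh_ofReal_re, Complex.sin_ofReal_im,
    Complex.sinh_ofReal_im, Complex.cos_ofReal_im, Complex.cosh_ofReal_im,
    Complex.sin_ofReal_re, Complex.sinh_ofReal_re]

lemma my_sinh_eq_zero {z : ℂ} (h : Complex.sinh z = 0) : ∃ k : ℤ, z = k * Real.pi * I := by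
  have hz : (-(z * I)) * I = z := by
    have : I * I = -1 := Complex.I_mul_I
    ring_nf
    rw [Complex.I_sq]
    ring
  have hs := Complex.sinh_mul_I (x := -(z * I))
  rw [hz, h] at hs
  have hsin : Complex.sin (-(z * I)) = 0 := by
    rcases mul_eq_zero.mp hs.symm with h' | h'
    · exact h'
    · exact absurd h' Complex.I_ne_zero
  obtain ⟨k, hk⟩ := Complex.sin_eq_zero_iff.mp hsin
  refine ⟨k, ?_⟩
  have : z = (-(z * I)) * I := hz.symm
  rw [this, hk]

/-- cosh is injective on half-strips: if `|im| < π/2` for both points and the sum of real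
parts is nonzero, equality of cosh forces equality. -/
lemma my_cosh_inj {a b : ℂ} (ha : |a.im| < Real.pi / 2) (hb : |b.im| < Real.pi / 2)
    (hsum : a.re + b.re ≠ 0) (h : Complex.cosh a = Complex.cosh b) : a = b := by
  have key : Complex.sinh ((a + b) / 2) * Complex.sinh ((a - b) / 2) = 0 := by
    have h1 := Complex.cosh_add ((a + b) / 2) ((a - b) / 2)
    have h2 := Complex.cosh_sub ((a + b) / 2) ((a - b) / 2)
    have e1 : (a + b) / 2 + (a - b) / 2 = a := by ring
    have e2 : (a + b) / 2 - (a - b) / 2 = b := by ring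
    rw [e1] at h1; rw [e2] at h2
    have : Complex.cosh a - Complex.cosh b =
        2 * (Complex.sinh ((a + b) / 2) * Complex.sinh ((a - b) / 2)) := by
      rw [h1, h2]; ring
    rw [h, sub_self] at this
    linear_combination -this / 2
  rcases mul_eq_zero.mp key with hc | hc
  · exfalso
    obtain ⟨k, hk⟩ := my_sinh_eq_zero hc
    have : ((a + b) / 2).re = 0 := by rw [hk]; simp
    have : (a.re + b.re) / 2 = 0 := by simpa using this
    exact hsum (by linarith)
  · obtain ⟨k, hk⟩ := my_sinh_eq_zero hc
    have him : ((a - b) / 2).im = (k : ℝ) * Real.pi := by rw [hk]; simp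
    have him' : ((a - b) / 2).im = (a.im - b.im) / 2 := by simp
    have hpi := Real.pi_pos
    have hbound : |(a.im - b.im) / 2| < Real.pi / 2 := by
      rw [abs_lt] at ha hb ⊢
      constructor <;> [linarith [ha.1, ha.2, hb.1, hb.2]; linarith [ha.1, ha.2, hb.1, hb.2]]
    have hk0 : k = 0 := by
      by_contra hk0
      have : (1 : ℝ) ≤ |(k : ℝ)| := by
        exact_mod_cast Int.one_le_abs (by exact_mod_cast hk0)
      have : Real.pi ≤ |(k : ℝ) * Real.pi| := by
        rw [abs_mul, abs_of_pos hpi]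
        nlinarith
      rw [← him, him'] at this
      linarith [hbound, this]
    have : (a - b) / 2 = 0 := by rw [hk, hk0]; simp
    have hab : a - b = 0 := by
      field_simp at this
      rw [mul_zero] at this
      exact this
    exact sub_eq_zero.mp hab

/-- The map `V(z) = cosh(φ⁻¹(z))`, where `φ(ζ) = i(ζ + sinh ζ)` maps the
right (resp. left) half-strip onto `Ω₁⁺ = Ω₁ ∩ {Im z > 0}` (resp. `Ω₁⁻ = Ω₁ ∩ {Im z < 0}`),
is injective on each of `Ω₁⁺`, `Ω₁⁻`, with image contained in the slit right half-plane
`{ξ : Re ξ > 0} \ (0, 1]`. -/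
theorem hairpin_conformal_halves
    (S : Set ℂ) (hS : S = {ζ : ℂ | |ζ.im| < Real.pi / 2})
    (Ω₁ : Set ℂ) (hΩ : Ω₁ = {z : ℂ | |z.re| < Real.pi / 2 + Real.cosh z.im})
    (φ : ℂ → ℂ) (hφ : ∀ ζ, φ ζ = I * (ζ + Complex.sinh ζ))
    (Sp Sm Ωp Ωm : Set ℂ)
    (hSp : Sp = {ζ ∈ S | 0 < ζ.re}) (hSm : Sm = {ζ ∈ S | ζ.re < 0})
    (hΩp : Ωp = {z ∈ Ω₁ | 0 < z.im}) (hΩm : Ωm = {z ∈ Ω₁ | z.im < 0})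
    (hbijp : Set.BijOn φ Sp Ωp) (hbijm : Set.BijOn φ Sm Ωm)
    (V : ℂ → ℂ)
    (hVφ : ∀ ζ ∈ S, V (φ ζ) = Complex.cosh ζ) :
    (Set.InjOn V Ωp ∧ Set.InjOn V Ωm) ∧
      Set.MapsTo V (Ωp ∪ Ωm)
        ({ξ : ℂ | 0 < ξ.re} \ {ξ : ℂ | ξ.im = 0 ∧ ξ.re ∈ Set.Ioc (0 : ℝ) 1}) := by
  -- membership facts
  have hSpS : Sp ⊆ S := by rw [hSp]; intro x hx; exact hx.1
  have hSmS : Sm ⊆ S := by rw [hSm]; intro x hx; exact hx.1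
  have injP : Set.InjOn V Ωp := by
    intro z₁ hz₁ z₂ hz₂ hV
    obtain ⟨ζ₁, hζ₁, rfl⟩ := hbijp.surjOn hz₁
    obtain ⟨ζ₂, hζ₂, rfl⟩ := hbijp.surjOn hz₂
    rw [hVφ ζ₁ (hSpS hζ₁), hVφ ζ₂ (hSpS hζ₂)] at hV
    have h1 := hζ₁; have h2 := hζ₂
    rw [hSp] at h1 h2
    rw [hS] at *
    have : ζ₁ = ζ₂ := my_cosh_inj h1.1 h2.1 (by have := h1.2; have := h2.2; positivity) hV
    rw [this]
  have injM : Set.InjOn V Ωm := by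
    intro z₁ hz₁ z₂ hz₂ hV
    obtain ⟨ζ₁, hζ₁, rfl⟩ := hbijm.surjOn hz₁
    obtain ⟨ζ₂, hζ₂, rfl⟩ := hbijm.surjOn hz₂
    rw [hVφ ζ₁ (hSmS hζ₁), hVφ ζ₂ (hSmS hζ₂)] at hV
    have h1 := hζ₁; have h2 := hζ₂
    rw [hSm] at h1 h2
    rw [hS] at *
    have hne : ζ₁.re + ζ₂.re ≠ 0 := by
      have := h1.2; have := h2.2; intro hc; linarith
    exact congrArg φ (my_cosh_inj h1.1 h2.1 hne hV)
  refine ⟨⟨injP, injM⟩, ?_⟩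
  -- maps-to
  intro z hz
  have : ∃ ζ, ζ ∈ S ∧ ζ.re ≠ 0 ∧ φ ζ = z := by
    rcases hz with hz | hz
    · obtain ⟨ζ, hζ, hζz⟩ := hbijp.surjOn hz
      rw [hSp] at hζ
      exact ⟨ζ, hζ.1, ne_of_gt hζ.2, hζz⟩
    · obtain ⟨ζ, hζ, hζz⟩ := hbijm.surjOn hz
      rw [hSm] at hζ
      exact ⟨ζ, hζ.1, ne_of_lt hζ.2, hζz⟩
  obtain ⟨ζ, hζS, hre, rfl⟩ := this
  rw [hVφ ζ hζS]
  have him : |ζ.im| < Real.pi / 2 := by rw [hS] at hζS; exact hζS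
  have hcos : 0 < Real.cos ζ.im := by
    apply Real.cos_pos_of_mem_Ioo
    rw [abs_lt] at him
    exact ⟨by linarith [him.1], him.2⟩
  constructor
  · show 0 < (Complex.cosh ζ).re
    rw [my_cosh_re]
    positivity
  · intro ⟨him0, hre0⟩
    rw [my_cosh_im] at him0
    rcases mul_eq_zero.mp him0 with h | h
    · exact hre (Real.sinh_eq_zero.mp h)
    · have : ζ.im = 0 := by
        rw [abs_lt] at him
        exact Real.sin_eq_zero_iff_of_lt_of_lt (by linarith [him.1, Real.pi_gt_three])
          (by linarith [him.2, Real.pi_gt_three]) |>.mp h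
      rw [my_cosh_re, this, Real.cos_zero, mul_one] at hre0
      have : 1 < Real.cosh ζ.re := by
        have := Real.one_lt_cosh.mpr hre  -- guess name
        exact this
      exact absurd hre0.2 (not_le.mpr this)
end

section
/- Universal Lipschitz bound: let u be a classical solution of the one-phase free boundary problem in B_R(0) ⊂ ℝ². If the largest disk contained in {u > 0} ∩ B_R centered at a point x touches the free boundary F(u), then |∇u(x)| ≤ C for a universal constant C. In particular, if 0 ∈ F(u), then ‖∇u‖_{L^∞(B_{R/2})} ≤ C. -/
open Filter Metric

noncomputable def lap (v : EuclideanSpace ℝ (Fin 2) → ℝ) (x : EuclideanSpace ℝ (Fin 2)) : ℝ :=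
  ∑ i : Fin 2, fderiv ℝ (fun y => fderiv ℝ v y (EuclideanSpace.single i 1)) x
    (EuclideanSpace.single i 1)


section Aux

open Metric Complex


lemma clm_decomp {F : Type*} [NormedAddCommGroup F] [NormedSpace ℝ F]
    (L : ℂ →L[ℝ] F) (w : ℂ) : L w = w.re • L 1 + w.im • L Complex.I := by
  have hw : w = (w.re : ℝ) • (1:ℂ) + (w.im : ℝ) • Complex.I := by
    simpa [Complex.real_smul] using (Complex.re_add_im w).symm
  conv_lhs => rw [hw]
  rw [map_add, map_smul, map_smul]

lemma clm_ext_complex {F : Type*} [NormedAddCommGroup F] [NormedSpace ℝ F]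
    {L M : ℂ →L[ℝ] F} (h1 : L 1 = M 1) (hI : L Complex.I = M Complex.I) : L = M := by
  ext w
  rw [clm_decomp L w, clm_decomp M w, h1, hI]

lemma hasDerivAt_of_cr {f : ℂ → ℂ} {L : ℂ →L[ℝ] ℂ} {z : ℂ}
    (h : HasFDerivAt f L z) (hcr : L Complex.I = Complex.I * L 1) :
    HasDerivAt f (L 1) z := by
  have hEq : (ContinuousLinearMap.smulRight (1 : ℂ →L[ℂ] ℂ) (L 1)).restrictScalars ℝ = L := by
    apply clm_ext_complex <;> simp [hcr] <;> ring
  have h3 : HasFDerivAt f (ContinuousLinearMap.smulRight (1 : ℂ →L[ℂ] ℂ) (L 1)) z :=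
    hasFDerivAt_of_restrictScalars ℝ h hEq
  simpa using hasFDerivAt_iff_hasDerivAt.mp h3

lemma opNorm_le_abs {L : ℂ →L[ℝ] ℝ} :
    ‖L‖ ≤ ‖((L 1 : ℝ) - (L Complex.I : ℝ) * Complex.I : ℂ)‖ := by
  set a := L 1; set b := L Complex.I
  have habs : ‖((a:ℂ) - (b:ℂ) * Complex.I)‖ = Real.sqrt (a^2 + b^2) := by
    rw [Complex.norm_def, Complex.normSq_apply]
    norm_num [pow_two]
  rw [habs]
  refine ContinuousLinearMap.opNorm_le_bound _ (Real.sqrt_nonneg _) (fun w => ?_)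
  have hLw : L w = w.re * a + w.im * b := by
    rw [clm_decomp L w]; simp [smul_eq_mul, a, b]
  have hnw : ‖w‖ = Real.sqrt (w.re^2 + w.im^2) := by
    rw [Complex.norm_def, Complex.normSq_apply]; norm_num [pow_two]
  rw [hLw, hnw, Real.norm_eq_abs, ← Real.sqrt_mul_self (abs_nonneg (w.re * a + w.im * b)),
    ← Real.sqrt_mul ((by positivity) : (0:ℝ) ≤ a^2 + b^2)]
  apply Real.sqrt_le_sqrt
  have key : (w.re * a + w.im * b)^2 ≤ (a^2+b^2) * (w.re^2 + w.im^2) := by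
    nlinarith [sq_nonneg (a * w.im - b * w.re)]
  calc |w.re * a + w.im * b| * |w.re * a + w.im * b| = (w.re * a + w.im * b)^2 := by
        rw [← abs_mul, ← pow_two]; exact abs_of_nonneg (sq_nonneg _)
    _ ≤ _ := key

lemma f_holo {U : ℂ → ℝ} {s : Set ℂ} (hs : IsOpen s) (hU : ContDiffOn ℝ 2 U s)
    (hharm : ∀ z ∈ s, fderiv ℝ (fun y => fderiv ℝ U y 1) z 1
        + fderiv ℝ (fun y => fderiv ℝ U y Complex.I) z Complex.I = 0)
    {z : ℂ} (hz : z ∈ s) :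
    DifferentiableAt ℂ
      (fun w => ((fderiv ℝ U w 1 : ℝ) : ℂ) - (fderiv ℝ U w Complex.I : ℝ) * Complex.I) z := by
  have hDU : ContDiffOn ℝ 1 (fderiv ℝ U) s := hU.fderiv_of_isOpen hs (by norm_num)
  have hBdiff : DifferentiableAt ℝ (fderiv ℝ U) z :=
    ((hDU.differentiableOn (by norm_num)) z hz).differentiableAt (hs.mem_nhds hz)
  set B := fderiv ℝ (fderiv ℝ U) z with hBdef
  have hB : HasFDerivAt (fderiv ℝ U) B z := hBdiff.hasFDerivAt
  have hUdiff : ∀ y ∈ s, DifferentiableAt ℝ U y := fun y hy =>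
    ((hU.differentiableOn (by norm_num)) y hy).differentiableAt (hs.mem_nhds hy)
  have hsym : ∀ v w : ℂ, B v w = B w v := by
    intro v w
    refine second_derivative_symmetric_of_eventually_of_real (f := U) ?_ hB v w
    filter_upwards [hs.mem_nhds hz] with y hy using (hUdiff y hy).hasFDerivAt
  have hcomp : ∀ e : ℂ, HasFDerivAt (fun y => fderiv ℝ U y e)
      ((ContinuousLinearMap.apply ℝ ℝ e).comp B) z := fun e =>
    (ContinuousLinearMap.apply ℝ ℝ e).hasFDerivAt.comp z hB
  have harm : B 1 1 + B Complex.I Complex.I = 0 := by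
    have h1 := (hcomp 1).fderiv
    have h2 := (hcomp Complex.I).fderiv
    have := hharm z hz
    rw [h1, h2] at this
    simpa using this
  have h1 : HasFDerivAt (fun y => ((fderiv ℝ U y 1 : ℝ) : ℂ))
      (Complex.ofRealCLM.comp ((ContinuousLinearMap.apply ℝ ℝ 1).comp B)) z :=
    Complex.ofRealCLM.hasFDerivAt.comp z (hcomp 1)
  have h2 : HasFDerivAt (fun y => ((fderiv ℝ U y Complex.I : ℝ) : ℂ))
      (Complex.ofRealCLM.comp ((ContinuousLinearMap.apply ℝ ℝ Complex.I).comp B)) z :=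
    Complex.ofRealCLM.hasFDerivAt.comp z (hcomp Complex.I)
  have hM : HasFDerivAt
      (fun w => ((fderiv ℝ U w 1 : ℝ) : ℂ) - (fderiv ℝ U w Complex.I : ℝ) * Complex.I)
      (Complex.ofRealCLM.comp ((ContinuousLinearMap.apply ℝ ℝ 1).comp B)
        - (Complex.ofRealCLM.comp
            ((ContinuousLinearMap.apply ℝ ℝ Complex.I).comp B)).smulRight Complex.I) z :=
    h1.sub (h2.mul_const' Complex.I)
  have hcr : (Complex.ofRealCLM.comp ((ContinuousLinearMap.apply ℝ ℝ 1).comp B)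
        - (Complex.ofRealCLM.comp
            ((ContinuousLinearMap.apply ℝ ℝ Complex.I).comp B)).smulRight Complex.I) Complex.I
      = Complex.I * (Complex.ofRealCLM.comp ((ContinuousLinearMap.apply ℝ ℝ 1).comp B)
        - (Complex.ofRealCLM.comp
            ((ContinuousLinearMap.apply ℝ ℝ Complex.I).comp B)).smulRight Complex.I) 1 := by
    have hIone : B Complex.I 1 = B 1 Complex.I := hsym Complex.I 1
    have hII : B Complex.I Complex.I = -B 1 1 := by linarith [harm]
    apply Complex.ext <;>
      simp [ContinuousLinearMap.smulRight_apply, Complex.smul_re, Complex.smul_im,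
        hIone, hII, smul_eq_mul]
  exact (hasDerivAt_of_cr hM hcr).differentiableAt

lemma primitive_hasDerivAt {f : ℂ → ℂ} {c : ℂ} {r : ℝ}
    (hf : DifferentiableOn ℂ f (ball c r)) :
    ∀ z ∈ ball c r,
      HasDerivAt (fun w => (w - c) * ∫ t in (0:ℝ)..1, f (c + (t:ℂ) * (w - c))) (f z) z := by
  intro z₀ hz₀
  have hrpos : 0 < r := pos_of_mem_ball hz₀
  have hballopen : IsOpen (ball c r) := isOpen_ball
  have hfc : ContinuousOn f (ball c r) := hf.continuousOn
  have hsmooth : ContDiffOn ℂ 1 f (ball c r) := hf.contDiffOn hballopen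
  have hderivcont : ContinuousOn (deriv f) (ball c r) :=
    hsmooth.continuousOn_deriv_of_isOpen hballopen le_rfl
  set d₀ := dist z₀ c with hd₀
  have hd₀r : d₀ < r := mem_ball.mp hz₀
  set ρ := (d₀ + r) / 2 with hρ
  set ε := (r - d₀) / 2 with hε
  have hεpos : 0 < ε := by simp [hε]; linarith
  have hρr : ρ < r := by simp [hρ]; linarith
  have hρ0 : 0 ≤ ρ := by simp [hρ]; positivity
  have hsub : closedBall c ρ ⊆ ball c r := closedBall_subset_ball hρr
  -- path stays in closedBall c ρ
  have hpath : ∀ w ∈ ball z₀ ε, ∀ t : ℝ, |t| ≤ 1 → c + (t:ℂ) * (w - c) ∈ closedBall c ρ := by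
    intro w hw t ht
    rw [mem_closedBall, dist_eq_norm]
    have h1 : ‖c + (t:ℂ) * (w - c) - c‖ = |t| * ‖w - c‖ := by
      simp [map_mul, abs_mul]
    rw [h1]
    have h2 : ‖w - c‖ ≤ ρ := by
      have := dist_triangle w z₀ c
      rw [← dist_eq_norm]
      have hwz : dist w z₀ < ε := mem_ball.mp hw
      simp [hρ, hε] at *
      linarith
    calc |t| * ‖w - c‖ ≤ 1 * ρ := by
          apply mul_le_mul ht h2 (norm_nonneg _) zero_le_one
      _ = ρ := one_mul ρ
  obtain ⟨M, hM⟩ := (isCompact_closedBall c ρ).exists_bound_of_continuousOn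
    (hderivcont.mono hsub)
  have hM0 : 0 ≤ M := le_trans (norm_nonneg _) (hM c (mem_closedBall_self hρ0))
  -- derivative of inner integral
  set F : ℂ → ℝ → ℂ := fun w t => f (c + (t:ℂ) * (w - c)) with hF
  set F' : ℂ → ℝ → ℂ →L[ℂ] ℂ := fun w t =>
    ContinuousLinearMap.smulRight (1 : ℂ →L[ℂ] ℂ) (deriv f (c + (t:ℂ) * (w - c)) * t) with hF'
  have hpathcont : ∀ w, Continuous (fun t : ℝ => c + (t:ℂ) * (w - c)) := by
    intro w; continuity
  have hFcont : ∀ w ∈ ball z₀ ε, ContinuousOn (F w) (Set.uIcc (0:ℝ) 1) := by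
    intro w hw
    apply (hfc.mono hsub).comp (hpathcont w).continuousOn
    intro t ht
    apply hpath w hw
    rw [Set.uIcc_of_le (by norm_num : (0:ℝ) ≤ 1)] at ht
    rw [abs_le]; constructor <;> linarith [ht.1, ht.2]
  have hz₀ball : z₀ ∈ ball z₀ ε := mem_ball_self hεpos
  have hintF : IntervalIntegrable (F z₀) MeasureTheory.volume 0 1 :=
    (hFcont z₀ hz₀ball).intervalIntegrable
  have hDcont : ∀ w ∈ ball z₀ ε,
      ContinuousOn (fun t : ℝ => deriv f (c + (t:ℂ) * (w - c)) * (t:ℂ)) (Set.uIcc (0:ℝ) 1) := by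
    intro w hw
    apply ContinuousOn.mul
    · apply (hderivcont.mono hsub).comp (hpathcont w).continuousOn
      intro t ht
      apply hpath w hw
      rw [Set.uIcc_of_le (by norm_num : (0:ℝ) ≤ 1)] at ht
      rw [abs_le]; constructor <;> linarith [ht.1, ht.2]
    · exact (Complex.continuous_ofReal.comp continuous_id).continuousOn
  have hkey : HasFDerivAt (fun w => ∫ t in (0:ℝ)..1, F w t)
      (∫ t in (0:ℝ)..1, F' z₀ t) z₀ := by
    apply intervalIntegral.hasFDerivAt_integral_of_dominated_of_fderiv_le
      (bound := fun _ => M) (ball_mem_nhds z₀ hεpos)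
    · filter_upwards [ball_mem_nhds z₀ hεpos] with w hw
      exact ((hFcont w hw).mono Set.uIoc_subset_uIcc).aestronglyMeasurable measurableSet_uIoc
    · exact hintF
    · apply ContinuousOn.aestronglyMeasurable _ measurableSet_uIoc
      have : ContinuousOn (fun t : ℝ => deriv f (c + (t:ℂ) * (z₀ - c)) * (t:ℂ)) (Set.uIoc (0:ℝ) 1) :=
        (hDcont z₀ hz₀ball).mono Set.uIoc_subset_uIcc
      exact (ContinuousLinearMap.smulRightL ℂ ℂ ℂ (1 : ℂ →L[ℂ] ℂ)).continuous.comp_continuousOn this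
    · apply MeasureTheory.ae_of_all
      intro t ht w hw
      have htle : |t| ≤ 1 := by
        rw [Set.uIoc_of_le (by norm_num : (0:ℝ) ≤ 1)] at ht
        rw [abs_le]; constructor <;> linarith [ht.1, ht.2]
      have : ‖F' w t‖ = ‖deriv f (c + (t:ℂ) * (w - c)) * (t:ℂ)‖ := by
        rw [hF']
        simp [ContinuousLinearMap.norm_smulRight_apply]
      rw [this, norm_mul]
      calc ‖deriv f (c + (t:ℂ) * (w - c))‖ * ‖(t:ℂ)‖
          ≤ M * 1 := by
            apply mul_le_mul (hM _ (hpath w hw t htle)) _ (norm_nonneg _) hM0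
            simpa using htle
        _ = M := mul_one M
    · exact intervalIntegrable_const
    · apply MeasureTheory.ae_of_all
      intro t ht w hw
      have htle : |t| ≤ 1 := by
        rw [Set.uIoc_of_le (by norm_num : (0:ℝ) ≤ 1)] at ht
        rw [abs_le]; constructor <;> linarith [ht.1, ht.2]
      have hy : c + (t:ℂ) * (w - c) ∈ ball c r := hsub (hpath w hw t htle)
      have houter : HasDerivAt f (deriv f (c + (t:ℂ) * (w - c))) (c + (t:ℂ) * (w - c)) :=
        (hf.differentiableAt (hballopen.mem_nhds hy)).hasDerivAt
      have hinner : HasDerivAt (fun w : ℂ => c + (t:ℂ) * (w - c)) (t:ℂ) w := by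
        simpa using (((hasDerivAt_id w).sub_const c).const_mul (t:ℂ)).const_add c
      have := houter.comp w hinner
      exact this.hasFDerivAt
  -- now finish
  have hDint : IntervalIntegrable (fun t : ℝ => deriv f (c + (t:ℂ) * (z₀ - c)) * (t:ℂ))
      MeasureTheory.volume 0 1 := (hDcont z₀ hz₀ball).intervalIntegrable
  set K := ∫ t in (0:ℝ)..1, deriv f (c + (t:ℂ) * (z₀ - c)) * (t:ℂ) with hK
  have hswap : (∫ t in (0:ℝ)..1, F' z₀ t)
      = ContinuousLinearMap.smulRight (1 : ℂ →L[ℂ] ℂ) K := by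
    rw [hK]
    have := (ContinuousLinearMap.smulRightL ℂ ℂ ℂ (1 : ℂ →L[ℂ] ℂ)).intervalIntegral_comp_comm hDint
    simpa [hF', ContinuousLinearMap.smulRightL] using this
  have hDA : HasDerivAt (fun w => ∫ t in (0:ℝ)..1, F w t) K z₀ := by
    rw [hswap] at hkey
    simpa using hasFDerivAt_iff_hasDerivAt.mp hkey
  have hg : HasDerivAt (fun w => (w - c) * ∫ t in (0:ℝ)..1, F w t)
      (1 * (∫ t in (0:ℝ)..1, F z₀ t) + (z₀ - c) * K) z₀ :=
    (((hasDerivAt_id z₀).sub_const c)).mul hDA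
  have habs1 : ∀ t : ℝ, t ∈ Set.uIcc (0:ℝ) 1 → |t| ≤ 1 := by
    intro t ht
    rw [Set.uIcc_of_le (by norm_num : (0:ℝ) ≤ 1)] at ht
    rw [abs_le]; constructor <;> linarith [ht.1, ht.2]
  have hFTC : ∫ t in (0:ℝ)..1,
      (F z₀ t + (t:ℂ) * (deriv f (c + (t:ℂ) * (z₀ - c)) * (z₀ - c))) = f z₀ := by
    have hΦ : ∀ t ∈ Set.uIcc (0:ℝ) 1,
        HasDerivAt (fun t : ℝ => (t:ℂ) * f (c + (t:ℂ) * (z₀ - c)))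
          (F z₀ t + (t:ℂ) * (deriv f (c + (t:ℂ) * (z₀ - c)) * (z₀ - c))) t := by
      intro t ht
      have hofReal : HasDerivAt (fun t : ℝ => (t:ℂ)) 1 t := by
        simpa using (hasDerivAt_id t).ofReal_comp
      have hγ : HasDerivAt (fun t : ℝ => c + (t:ℂ) * (z₀ - c)) (z₀ - c) t := by
        simpa using (hofReal.mul_const (z₀ - c)).const_add c
      have hy : c + (t:ℂ) * (z₀ - c) ∈ ball c r := hsub (hpath z₀ hz₀ball t (habs1 t ht))
      have houter : HasDerivAt f (deriv f (c + (t:ℂ) * (z₀ - c))) (c + (t:ℂ) * (z₀ - c)) :=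
        (hf.differentiableAt (hballopen.mem_nhds hy)).hasDerivAt
      have hψ : HasDerivAt (fun t : ℝ => f (c + (t:ℂ) * (z₀ - c)))
          (deriv f (c + (t:ℂ) * (z₀ - c)) * (z₀ - c)) t := by
        have := (houter.hasFDerivAt.restrictScalars ℝ).comp_hasDerivAt t hγ
        simpa [mul_comm, Function.comp_def] using this
      have := hofReal.mul hψ
      simpa [hF, one_mul, Pi.mul_def] using this
    have hcont2 : ContinuousOn
        (fun t : ℝ => F z₀ t + (t:ℂ) * (deriv f (c + (t:ℂ) * (z₀ - c)) * (z₀ - c)))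
        (Set.uIcc (0:ℝ) 1) := by
      apply (hFcont z₀ hz₀ball).add
      have : ContinuousOn (fun t : ℝ => deriv f (c + (t:ℂ) * (z₀ - c)) * (t:ℂ))
          (Set.uIcc (0:ℝ) 1) := hDcont z₀ hz₀ball
      have h2 := this.mul continuousOn_const (g := fun _ => z₀ - c)
      apply h2.congr
      intro t ht; simp only [Pi.mul_apply]; ring
    have := intervalIntegral.integral_eq_sub_of_hasDerivAt hΦ hcont2.intervalIntegrable
    rw [this]
    norm_num
  have hsplit : (∫ t in (0:ℝ)..1, F z₀ t) + (z₀ - c) * K = f z₀ := by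
    have hintD2 : IntervalIntegrable
        (fun t : ℝ => (t:ℂ) * (deriv f (c + (t:ℂ) * (z₀ - c)) * (z₀ - c)))
        MeasureTheory.volume 0 1 := by
      apply ContinuousOn.intervalIntegrable
      have h2 := (hDcont z₀ hz₀ball).mul continuousOn_const (g := fun _ => z₀ - c)
      apply h2.congr
      intro t ht; simp only [Pi.mul_apply]; ring
    have hadd := intervalIntegral.integral_add hintF hintD2
    rw [hFTC] at hadd
    have hmul : (∫ t in (0:ℝ)..1, (t:ℂ) * (deriv f (c + (t:ℂ) * (z₀ - c)) * (z₀ - c)))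
        = K * (z₀ - c) := by
      rw [hK, ← intervalIntegral.integral_mul_const]
      apply intervalIntegral.integral_congr
      intro t ht
      ring
    rw [hmul] at hadd
    linear_combination -hadd
  have : 1 * (∫ t in (0:ℝ)..1, F z₀ t) + (z₀ - c) * K = f z₀ := by
    rw [one_mul]; exact hsplit
  rw [← this]
  exact hg

set_option maxHeartbeats 1000000 in
lemma key_complex {U : ℂ → ℝ} {c : ℂ} {r : ℝ} (hr : 0 < r)
    (hU : ContDiffOn ℝ 2 U (ball c r))
    (hharm : ∀ z ∈ ball c r, fderiv ℝ (fun y => fderiv ℝ U y 1) z 1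
        + fderiv ℝ (fun y => fderiv ℝ U y Complex.I) z Complex.I = 0)
    (hpos : ∀ z ∈ ball c r, 0 < U z) :
    (∀ z ∈ ball c r, U c * ((r - dist z c) / (r + dist z c)) ≤ U z) ∧
      ‖fderiv ℝ U c‖ ≤ 2 * U c / r := by
  have hco : IsOpen (ball c r) := isOpen_ball
  have hcc : c ∈ ball c r := mem_ball_self hr
  set f : ℂ → ℂ := fun w =>
    ((fderiv ℝ U w 1 : ℝ) : ℂ) - ((fderiv ℝ U w Complex.I : ℝ) : ℂ) * Complex.I with hfdef
  have hfdiffOn : DifferentiableOn ℂ f (ball c r) := fun z hz =>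
    (f_holo hco hU hharm hz).differentiableWithinAt
  have hprim := primitive_hasDerivAt hfdiffOn
  set G : ℂ → ℂ := fun w =>
    ((U c : ℝ) : ℂ) + (w - c) * ∫ t in (0:ℝ)..1, f (c + (t:ℂ) * (w - c)) with hGdef
  have hG : ∀ z ∈ ball c r, HasDerivAt G (f z) z := fun z hz =>
    ((hprim z hz).const_add ((U c : ℝ) : ℂ))
  have hGc : G c = ((U c : ℝ) : ℂ) := by simp [hGdef]
  have hUd : ∀ z ∈ ball c r, HasFDerivAt U (fderiv ℝ U z) z := fun z hz =>
    (((hU.differentiableOn (by norm_num)) z hz).differentiableAt (hco.mem_nhds hz)).hasFDerivAt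
  -- real part of G is U
  have hRe : ∀ z ∈ ball c r, (G z).re = U z := by
    have hφ : ∀ z ∈ ball c r, HasFDerivWithinAt (fun w => U w - (G w).re)
        ((0 : ℂ →L[ℝ] ℝ)) (ball c r) z := by
      intro z hz
      have hGre : HasFDerivAt (fun w => (G w).re)
          (Complex.reCLM.comp ((ContinuousLinearMap.smulRight (1 : ℂ →L[ℂ] ℂ)
            (f z)).restrictScalars ℝ)) z :=
        Complex.reCLM.hasFDerivAt.comp z ((hG z hz).hasFDerivAt.restrictScalars ℝ)
      have hsub := (hUd z hz).sub hGre
      have hzero : fderiv ℝ U z - Complex.reCLM.comp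
          ((ContinuousLinearMap.smulRight (1 : ℂ →L[ℂ] ℂ) (f z)).restrictScalars ℝ)
          = (0 : ℂ →L[ℝ] ℝ) := by
        apply clm_ext_complex <;>
          simp [hfdef, ContinuousLinearMap.smulRight_apply, smul_eq_mul]
      rw [hzero] at hsub
      exact hsub.hasFDerivWithinAt
    intro z hz
    have h0 := (convex_ball c r).norm_image_sub_le_of_norm_hasFDerivWithin_le
      hφ (show ∀ x ∈ ball c r, ‖(0 : ℂ →L[ℝ] ℝ)‖ ≤ 0 from fun x _ => by simp) hcc hz
    rw [zero_mul] at h0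
    have h1 : (U z - (G z).re) - (U c - (G c).re) = 0 := norm_le_zero_iff.mp h0
    rw [hGc] at h1
    simp at h1
    linarith
  set a := U c with hadef
  have ha : 0 < a := hpos c hcc
  have hden : ∀ z ∈ ball c r, G z + (a:ℂ) ≠ 0 := by
    intro z hz h
    have := congrArg Complex.re h
    simp [Complex.add_re, hRe z hz] at this
    have := hpos z hz
    linarith
  set w : ℂ → ℂ := fun z => (G z - (a:ℂ)) / (G z + (a:ℂ)) with hwdef
  have hwc : w c = 0 := by
    simp [hwdef, hGc, ← hadef]
  have hwdiff : DifferentiableOn ℂ w (ball c r) := fun z hz =>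
    (((hG z hz).differentiableAt.sub_const _).div
      ((hG z hz).differentiableAt.add_const _) (hden z hz)).differentiableWithinAt
  have habslt : ∀ z ∈ ball c r, ‖G z - (a:ℂ)‖ < ‖G z + (a:ℂ)‖ := by
    intro z hz
    have hx : 0 < (G z).re := by rw [hRe z hz]; exact hpos z hz
    have h1 : Complex.normSq (G z - (a:ℂ)) < Complex.normSq (G z + (a:ℂ)) := by
      simp only [Complex.normSq_apply, Complex.sub_re, Complex.sub_im, Complex.add_re,
        Complex.add_im, Complex.ofReal_re, Complex.ofReal_im]
      nlinarith [hx, ha]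
    rw [Complex.norm_def, Complex.norm_def]
    exact Real.sqrt_lt_sqrt (Complex.normSq_nonneg _) h1
  have hmaps : Set.MapsTo w (ball c r) (ball (w c) 1) := by
    rw [hwc]
    intro z hz
    rw [mem_ball, dist_zero_right, hwdef]
    simp only [norm_div]
    rw [div_lt_one (lt_of_le_of_lt (norm_nonneg _) (habslt z hz))]
    exact habslt z hz
  constructor
  · -- Harnack
    intro z hz
    have hsch := Complex.dist_le_div_mul_dist_of_mapsTo_ball hwdiff (hmaps.mono_right ball_subset_closedBall) hz
    rw [hwc, dist_zero_right] at hsch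
    set d := dist z c with hd
    have hd0 : 0 ≤ d := dist_nonneg
    have hdr : d < r := mem_ball.mp hz
    have habs : ‖G z - (a:ℂ)‖ ≤ (d/r) * ‖G z + (a:ℂ)‖ := by
      have h2 : ‖w z‖ ≤ d / r := by
        calc ‖w z‖ ≤ 1 / r * dist z c := hsch
          _ = d / r := by rw [← hd]; ring
      rw [hwdef] at h2
      simp only [norm_div] at h2
      calc ‖G z - (a:ℂ)‖
          = ‖G z - (a:ℂ)‖ / ‖G z + (a:ℂ)‖
            * ‖G z + (a:ℂ)‖ := by
            field_simp [(norm_ne_zero_iff.mpr (hden z hz))]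
        _ ≤ (d/r) * ‖G z + (a:ℂ)‖ :=
            mul_le_mul_of_nonneg_right h2 (norm_nonneg _)
    set x := U z with hxdef
    have hx : 0 < x := hpos z hz
    have hsq : (‖G z - (a:ℂ)‖)^2 ≤ ((d/r) * ‖G z + (a:ℂ)‖)^2 := by
      apply sq_le_sq' _ habs
      calc -( (d/r) * ‖G z + (a:ℂ)‖) ≤ 0 := by
            apply neg_nonpos_of_nonneg
            exact mul_nonneg (by positivity) (norm_nonneg _)
        _ ≤ ‖G z - (a:ℂ)‖ := norm_nonneg _
    have hGre : (G z).re = x := hRe z hz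
    set y := (G z).im with hydef
    have hsq2 : r^2 * ((x-a)^2 + y^2) ≤ d^2 * ((x+a)^2 + y^2) := by
      have e1 : (‖G z - (a:ℂ)‖)^2 = (x-a)^2 + y^2 := by
        rw [Complex.sq_norm, Complex.normSq_apply]
        simp [hGre, ← hydef]
        ring
      have e2 : (‖G z + (a:ℂ)‖)^2 = (x+a)^2 + y^2 := by
        rw [Complex.sq_norm, Complex.normSq_apply]
        simp [hGre, ← hydef]
        ring
      rw [e1] at hsq
      have : ((d/r) * ‖G z + (a:ℂ)‖)^2 = d^2/r^2 * ((x+a)^2+y^2) := by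
        rw [mul_pow, e2]; ring
      rw [this] at hsq
      have hr2 : (0:ℝ) < r^2 := by positivity
      calc r^2 * ((x-a)^2 + y^2) ≤ r^2 * (d^2/r^2 * ((x+a)^2+y^2)) := by
            apply mul_le_mul_of_nonneg_left hsq (le_of_lt hr2)
        _ = d^2 * ((x+a)^2 + y^2) := by field_simp
    -- deduce a*(r-d) ≤ x*(r+d)
    have hW : 0 ≤ r*(x-a) + d*(x+a) := by
      by_contra hWneg
      push_neg at hWneg
      have hWQ : 0 ≤ (r*(x-a) + d*(x+a)) * (d*(x+a) - r*(x-a)) := by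
        nlinarith [hsq2, mul_nonneg (mul_nonneg (sub_nonneg.mpr (le_of_lt hdr))
          (by linarith : (0:ℝ) ≤ r + d)) (sq_nonneg y)]
      have hQ : d*(x+a) - r*(x-a) ≤ 0 := by
        nlinarith [hWQ, hWneg]
      have hsum : (r*(x-a) + d*(x+a)) + (d*(x+a) - r*(x-a)) = 2*d*(x+a) := by ring
      have : 2*d*(x+a) < 0 := by linarith
      nlinarith [mul_nonneg hd0 (le_of_lt (add_pos hx ha))]
    rw [mul_div_assoc' a (r - d) (r + d), div_le_iff₀ (by linarith : (0:ℝ) < r + d)]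
    nlinarith [hW]
  · -- gradient bound
    have hGca : G c + (a:ℂ) = 2*(a:ℂ) := by rw [hGc]; push_cast; ring
    have hdenc : G c + (a:ℂ) ≠ 0 := hden c hcc
    have hnum : HasDerivAt (fun z => G z - (a:ℂ)) (f c) c := (hG c hcc).sub_const _
    have hden2 : HasDerivAt (fun z => G z + (a:ℂ)) (f c) c := (hG c hcc).add_const _
    have hwder : HasDerivAt w ((f c * (G c + (a:ℂ)) - (G c - (a:ℂ)) * f c) / (G c + (a:ℂ))^2) c :=
      hnum.div hden2 hdenc
    have e0 : G c - (a:ℂ) = 0 := by rw [hGc]; ring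
    have e1 : G c + (a:ℂ) = 2*(a:ℂ) := by rw [hGc]; ring
    have h2a0 : ((a:ℂ)) ≠ 0 := by exact_mod_cast ne_of_gt ha
    have hval : (f c * (G c + (a:ℂ)) - (G c - (a:ℂ)) * f c) / (G c + (a:ℂ))^2
        = f c / (2*(a:ℂ)) := by
      rw [e0, e1, zero_mul, sub_zero]
      field_simp
    rw [hval] at hwder
    have hderiv_eq : deriv w c = f c / (2*(a:ℂ)) := hwder.deriv
    have hsch := Complex.norm_deriv_le_div_of_mapsTo_ball hwdiff (hmaps.mono_right ball_subset_closedBall) hr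
    rw [hderiv_eq] at hsch
    have hfc : ‖f c‖ ≤ 2*a/r := by
      have h2 : ‖f c / (2*(a:ℂ))‖ = ‖f c‖ / (2*a) := by
        simp only [norm_div]
        congr 1
        simp [abs_of_pos ha]
      rw [h2] at hsch
      rw [div_le_div_iff₀ (by linarith) hr] at hsch
      rw [le_div_iff₀ hr]
      linarith [hsch]
    calc ‖fderiv ℝ U c‖ ≤ ‖f c‖ := opNorm_le_abs
      _ ≤ 2*a/r := hfc
      _ = 2 * U c / r := by rw [← hadef]

set_option maxHeartbeats 1000000 in
lemma harnack_grad {u : EuclideanSpace ℝ (Fin 2) → ℝ} {s : Set (EuclideanSpace ℝ (Fin 2))}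
    (hs : IsOpen s) (hu : ContDiffOn ℝ 2 u s)
    (hlap : ∀ y ∈ s, lap u y = 0)
    {x : EuclideanSpace ℝ (Fin 2)} {r : ℝ} (hr : 0 < r) (hball : ball x r ⊆ s)
    (hupos : ∀ y ∈ ball x r, 0 < u y) :
    (∀ y ∈ ball x r, u x * ((r - dist y x) / (r + dist y x)) ≤ u y) ∧
      ‖gradient u x‖ ≤ 2 * u x / r := by
  classical
  set T := Complex.orthonormalBasisOneI.repr with hTdef
  set Tcl := T.toLinearIsometry.toContinuousLinearMap with hTcldef
  have hTcl : ⇑Tcl = ⇑T := by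
    ext z
    simp [hTcldef]
  have hTfd : ∀ z : ℂ, HasFDerivAt (⇑T) Tcl z := by
    intro z
    have := Tcl.hasFDerivAt (x := z)
    rwa [hTcl] at this
  have hT1 : T 1 = EuclideanSpace.single 0 (1:ℝ) := by
    apply PiLp.ext
    intro j
    fin_cases j <;> simp [hTdef, EuclideanSpace.single_apply]
  have hTI : T Complex.I = EuclideanSpace.single 1 (1:ℝ) := by
    apply PiLp.ext
    intro j
    fin_cases j <;> simp [hTdef, EuclideanSpace.single_apply]
  set c := T.symm x with hcdef
  have hTc : T c = x := T.apply_symm_apply x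
  set U : ℂ → ℝ := fun z => u (T z) with hUdef
  have hmem : ∀ z : ℂ, z ∈ ball c r ↔ T z ∈ ball x r := by
    intro z
    rw [mem_ball, mem_ball, ← hTc, T.dist_map]
  have hmem_s : ∀ z ∈ ball c r, T z ∈ s := fun z hz => hball ((hmem z).mp hz)
  have hxs : x ∈ s := hball (mem_ball_self hr)
  -- ContDiffOn of U
  have hU2 : ContDiffOn ℝ 2 U (ball c r) := by
    have h1 : ContDiffOn ℝ 2 (u ∘ ⇑Tcl) (ball c r) :=
      ContDiffOn.comp hu (Tcl.contDiff.contDiffOn)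
        (fun z hz => by rw [hTcl]; exact hmem_s z hz)
    have : u ∘ ⇑Tcl = U := by
      funext z; simp [hUdef, hTcl]
    rwa [this] at h1
  have hud : ∀ v ∈ s, DifferentiableAt ℝ u v := fun v hv =>
    ((hu.differentiableOn (by norm_num)) v hv).differentiableAt (hs.mem_nhds hv)
  have hchain : ∀ z : ℂ, T z ∈ s → fderiv ℝ U z = (fderiv ℝ u (T z)).comp Tcl := by
    intro z hz
    exact ((hud _ hz).hasFDerivAt.comp z (hTfd z)).fderiv
  have hDUE : ContDiffOn ℝ 1 (fderiv ℝ u) s := hu.fderiv_of_isOpen hs (by norm_num)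
  have hDUdiffAt : ∀ v ∈ s, DifferentiableAt ℝ (fderiv ℝ u) v := fun v hv =>
    ((hDUE.differentiableOn (by norm_num)) v hv).differentiableAt (hs.mem_nhds hv)
  have hφdiff : ∀ (e : EuclideanSpace ℝ (Fin 2)), ∀ v ∈ s,
      DifferentiableAt ℝ (fun w => fderiv ℝ u w e) v := by
    intro e v hv
    exact (ContinuousLinearMap.apply ℝ ℝ e).differentiableAt.comp v (hDUdiffAt v hv)
  have hsopen : IsOpen (⇑T ⁻¹' s) := hs.preimage T.continuous
  have hsecond : ∀ z : ℂ, T z ∈ s → ∀ (eC : ℂ) (eE : EuclideanSpace ℝ (Fin 2)), T eC = eE →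
      fderiv ℝ (fun y => fderiv ℝ U y eC) z eC
        = fderiv ℝ (fun v => fderiv ℝ u v eE) (T z) eE := by
    intro z hz eC eE hTe
    have hev : (fun y => fderiv ℝ U y eC) =ᶠ[nhds z] (fun y => fderiv ℝ u (T y) eE) := by
      filter_upwards [hsopen.mem_nhds hz] with y hy
      rw [hchain y hy]
      have : Tcl eC = eE := by rw [hTcl]; exact hTe
      simp [ContinuousLinearMap.comp_apply, this]
    rw [hev.fderiv_eq]
    have hcompfd : fderiv ℝ (fun y => (fderiv ℝ u (T y)) eE) z
        = (fderiv ℝ (fun w => (fderiv ℝ u w) eE) (T z)).comp Tcl :=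
      ((hφdiff eE (T z) hz).hasFDerivAt.comp z (hTfd z)).fderiv
    rw [hcompfd]
    have : Tcl eC = eE := by rw [hTcl]; exact hTe
    simp [ContinuousLinearMap.comp_apply, this]
  have hharmU : ∀ z ∈ ball c r, fderiv ℝ (fun y => fderiv ℝ U y 1) z 1
      + fderiv ℝ (fun y => fderiv ℝ U y Complex.I) z Complex.I = 0 := by
    intro z hz
    have hz' : T z ∈ s := hmem_s z hz
    rw [hsecond z hz' 1 _ hT1, hsecond z hz' Complex.I _ hTI]
    have := hlap (T z) hz'
    rw [lap, Fin.sum_univ_two] at this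
    exact this
  have hposU : ∀ z ∈ ball c r, 0 < U z := fun z hz => hupos _ ((hmem z).mp hz)
  obtain ⟨hHar, hGrad⟩ := key_complex hr hU2 hharmU hposU
  have hUc : U c = u x := by rw [hUdef]; simp [hTc]
  constructor
  · intro y hy
    have hzy : T (T.symm y) = y := T.apply_symm_apply y
    have hzball : T.symm y ∈ ball c r := by rw [hmem, hzy]; exact hy
    have := hHar (T.symm y) hzball
    rw [hUc] at this
    have hdisteq : dist (T.symm y) c = dist y x := by
      have h := T.dist_map (T.symm y) c
      rw [hzy, hTc] at h
      exact h.symm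
    rw [hdisteq] at this
    have hUy : U (T.symm y) = u y := by rw [hUdef]; simp [hzy]
    rwa [hUy] at this
  · have hgradnorm : ‖gradient u x‖ = ‖fderiv ℝ u x‖ := by
      rw [gradient]
      exact LinearIsometryEquiv.norm_map _ _
    have hcs : T c ∈ s := by rw [hTc]; exact hxs
    have hfd : fderiv ℝ U c = (fderiv ℝ u x).comp Tcl := by
      rw [hchain c hcs, hTc]
    have hnorm2 : ‖fderiv ℝ U c‖ = ‖fderiv ℝ u x‖ := by
      rw [hfd, hTcldef]
      exact (fderiv ℝ u x).opNorm_comp_linearIsometryEquiv T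
    rw [hgradnorm, ← hnorm2, ← hUc]
    exact hGrad

end Aux

set_option maxHeartbeats 4000000 in
/-- Universal Lipschitz bound: there is a universal constant `C > 0` such
that for any classical solution `u` of the one-phase free boundary problem in `B_R(0) ⊂ ℝ²`:
if the largest disk contained in the positive phase centered at `x` touches the free boundary
`F(u)`, then `|∇u(x)| ≤ C`; and if moreover `0 ∈ F(u)`, then `|∇u| ≤ C` throughout
`B_{R/2}` (on the positive phase). -/
theorem universal_lipschitz_bound :
    ∃ C > (0 : ℝ), ∀ (R : ℝ), 0 < R →
      ∀ (u : EuclideanSpace ℝ (Fin 2) → ℝ)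
        (pos F : Set (EuclideanSpace ℝ (Fin 2))),
        ContinuousOn u (ball (0 : EuclideanSpace ℝ (Fin 2)) R) →
        (∀ x, 0 ≤ u x) →
        pos = {x ∈ ball (0 : EuclideanSpace ℝ (Fin 2)) R | 0 < u x} →
        F = frontier pos ∩ ball (0 : EuclideanSpace ℝ (Fin 2)) R →
        ContDiffOn ℝ 2 u pos →
        (∀ x ∈ pos, lap u x = 0) →
        (∀ x₀ ∈ F, Tendsto (fun x => ‖gradient u x‖) (nhdsWithin x₀ pos) (nhds 1)) →
        (∀ x ∈ pos, ∀ r : ℝ, 0 < r → ball x r ⊆ pos →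
            (∃ p ∈ F, dist x p = r) → ‖gradient u x‖ ≤ C) ∧
        ((0 : EuclideanSpace ℝ (Fin 2)) ∈ F →
          ∀ x ∈ ball (0 : EuclideanSpace ℝ (Fin 2)) (R / 2), x ∈ pos →
            ‖gradient u x‖ ≤ C) := by
  refine ⟨8, by norm_num, ?_⟩
  intro R hR u pos F hcont hnonneg hposdef hFdef hcd hlapu htend
  have hposopen : IsOpen pos := by
    rw [hposdef]
    have : {x ∈ ball (0 : EuclideanSpace ℝ (Fin 2)) R | 0 < u x}
        = ball (0 : EuclideanSpace ℝ (Fin 2)) R ∩ u ⁻¹' Set.Ioi 0 := by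
      ext y; simp [Set.mem_sep_iff, Set.mem_preimage, Set.mem_Ioi, and_comm]
    rw [this]
    exact hcont.isOpen_inter_preimage isOpen_ball isOpen_Ioi
  have hpossub : pos ⊆ ball (0 : EuclideanSpace ℝ (Fin 2)) R := by
    rw [hposdef]; exact fun y hy => hy.1
  have huposin : ∀ y ∈ pos, 0 < u y := by
    rw [hposdef]; exact fun y hy => hy.2
  have hgradnorm : ∀ v, ‖gradient u v‖ = ‖fderiv ℝ u v‖ := by
    intro v
    rw [gradient]
    exact LinearIsometryEquiv.norm_map _ _
  have hFnotpos : ∀ q ∈ F, q ∉ pos := by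
    intro q hq
    rw [hFdef] at hq
    have := hq.1
    rw [hposopen.frontier_eq] at this
    exact this.2
  have hFzero : ∀ q ∈ F, u q = 0 := by
    intro q hq
    have h1 : q ∉ pos := hFnotpos q hq
    have h2 : q ∈ ball (0 : EuclideanSpace ℝ (Fin 2)) R := by rw [hFdef] at hq; exact hq.2
    have h3 : ¬ 0 < u q := by
      intro h
      exact h1 (by rw [hposdef]; exact ⟨h2, h⟩)
    linarith [hnonneg q]
  have hpart1 : ∀ x ∈ pos, ∀ r : ℝ, 0 < r → ball x r ⊆ pos →
      (∃ p ∈ F, dist x p = r) → ‖gradient u x‖ ≤ 8 := by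
    intro x hxpos r hrpos hballsub ⟨p, hpF, hdxp⟩
    obtain ⟨hHar, hGrad⟩ := harnack_grad hposopen hcd hlapu hrpos hballsub
      (fun y hy => huposin y (hballsub hy))
    -- upper bound for u x
    have hup : u p = 0 := hFzero p hpF
    have htp := htend p hpF
    have hev : ∀ᶠ y in nhdsWithin p pos, ‖gradient u y‖ < 2 :=
      htp.eventually_lt_const (by norm_num)
    obtain ⟨δ, hδpos, hδ⟩ := Metric.mem_nhdsWithin_iff.mp hev
    -- the segment points
    set yt : ℝ → EuclideanSpace ℝ (Fin 2) := fun t => p + (t/r) • (x - p) with hytdef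
    have hxp_norm : ‖x - p‖ = r := by rw [← dist_eq_norm]; exact hdxp
    have hyt_p : ∀ t : ℝ, 0 ≤ t → dist (yt t) p = t := by
      intro t ht
      rw [hytdef]
      simp only [dist_eq_norm, add_sub_cancel_left]
      rw [norm_smul, hxp_norm, Real.norm_eq_abs, abs_of_nonneg (by positivity)]
      field_simp
    have hyt_x : ∀ t : ℝ, 0 ≤ t → t ≤ r → dist (yt t) x = r - t := by
      intro t ht htr
      have heq : yt t - x = (t/r - 1) • (x - p) := by
        rw [hytdef]
        simp only []
        rw [sub_smul, one_smul]
        abel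
      rw [dist_eq_norm, heq, norm_smul, hxp_norm, Real.norm_eq_abs]
      rw [abs_of_nonpos (by
        have : t / r ≤ 1 := (div_le_one hrpos).mpr htr
        linarith)]
      field_simp
      ring
    set t₀ := min (δ/2) (r/2) with ht₀def
    have ht₀pos : 0 < t₀ := lt_min (by linarith) (by linarith)
    have ht₀δ : t₀ < δ := lt_of_le_of_lt (min_le_left _ _) (by linarith)
    have ht₀r : t₀ < r := lt_of_le_of_lt (min_le_right _ _) (by linarith)
    have hytmem : ∀ t : ℝ, 0 < t → t < r → yt t ∈ ball x r := by
      intro t ht htr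
      rw [mem_ball, hyt_x t (le_of_lt ht) (le_of_lt htr)]
      linarith
    -- convex set S
    set S := ball x r ∩ ball p δ with hSdef
    have hSconv : Convex ℝ S := (convex_ball x r).inter (convex_ball p δ)
    have hSsub : S ⊆ pos := fun y hy => hballsub hy.1
    have hSderiv : ∀ y ∈ S, HasFDerivWithinAt u (fderiv ℝ u y) S y := by
      intro y hy
      exact (((hcd.differentiableOn (by norm_num)) y (hSsub hy)).differentiableAt
        (hposopen.mem_nhds (hSsub hy))).hasFDerivAt.hasFDerivWithinAt
    have hSbound : ∀ y ∈ S, ‖fderiv ℝ u y‖ ≤ 2 := by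
      intro y hy
      have : y ∈ ball p δ ∩ pos := ⟨hy.2, hSsub hy⟩
      have := hδ this
      rw [Set.mem_setOf_eq, hgradnorm y] at this
      linarith
    have hytS : ∀ t : ℝ, 0 < t → t ≤ t₀ → yt t ∈ S := by
      intro t ht htle
      constructor
      · exact hytmem t ht (lt_of_le_of_lt htle ht₀r)
      · rw [mem_ball, hyt_p t (le_of_lt ht)]
        linarith
    have hMVT : ∀ s : ℝ, 0 < s → s ≤ t₀ →
        u (yt t₀) - u (yt s) ≤ 2 * (t₀ - s) := by
      intro s hs hst
      have h1 := hSconv.norm_image_sub_le_of_norm_hasFDerivWithin_le hSderiv hSbound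
        (hytS s hs hst) (hytS t₀ ht₀pos le_rfl)
      have h2 : ‖yt t₀ - yt s‖ = t₀ - s := by
        have h3 : ((t₀ - s)/r) • (x - p) = (t₀/r) • (x - p) - (s/r) • (x - p) := by
          rw [← sub_smul]
          congr 1
          ring
        have heq : yt t₀ - yt s = ((t₀ - s)/r) • (x - p) := by
          rw [hytdef]
          simp only []
          rw [h3]
          abel
        rw [heq, norm_smul, hxp_norm, Real.norm_eq_abs,
          abs_of_nonneg (div_nonneg (by linarith) (le_of_lt hrpos))]
        field_simp
      rw [h2] at h1
      calc u (yt t₀) - u (yt s) ≤ ‖u (yt t₀) - u (yt s)‖ := le_abs_self _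
        _ ≤ 2 * (t₀ - s) := h1
    -- limit as s → 0
    have hpball : p ∈ ball (0 : EuclideanSpace ℝ (Fin 2)) R := by
      rw [hFdef] at hpF; exact hpF.2
    have hytlim : Filter.Tendsto (fun s : ℝ => u (yt s)) (nhdsWithin 0 (Set.Ioi 0))
        (nhds 0) := by
      have hyt0 : yt 0 = p := by rw [hytdef]; simp
      have hcyt : Continuous yt := by
        apply Continuous.add continuous_const
        exact (continuous_id.div_const r).smul continuous_const
      have h0 : Filter.Tendsto yt (nhds (0:ℝ)) (nhds p) := by
        have := hcyt.tendsto (0:ℝ)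
        rwa [hyt0] at this
      have hcy : Filter.Tendsto yt (nhdsWithin 0 (Set.Ioi 0))
          (nhdsWithin p (ball (0 : EuclideanSpace ℝ (Fin 2)) R)) := by
        rw [tendsto_nhdsWithin_iff]
        refine ⟨h0.mono_left nhdsWithin_le_nhds, ?_⟩
        filter_upwards [Ioo_mem_nhdsGT_of_mem (Set.left_mem_Ico.mpr ht₀pos)] with s hs
        exact hpossub (hballsub (hytmem s hs.1 (lt_trans hs.2 ht₀r)))
      have hcomp := (hcont p hpball).tendsto.comp hcy
      rwa [hup] at hcomp
    have hupper : u (yt t₀) ≤ 2 * t₀ := by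
      have hlim : Filter.Tendsto (fun s : ℝ => 2 * (t₀ - s) + u (yt s))
          (nhdsWithin 0 (Set.Ioi 0)) (nhds (2 * t₀)) := by
        have hc : Continuous (fun s : ℝ => 2 * (t₀ - s)) :=
          continuous_const.mul (continuous_const.sub continuous_id)
        have h1 : Filter.Tendsto (fun s : ℝ => 2 * (t₀ - s)) (nhds (0:ℝ)) (nhds (2 * t₀)) := by
          have := hc.tendsto (0:ℝ)
          simpa using this
        have h2 := (h1.mono_left nhdsWithin_le_nhds).add hytlim
        simpa using h2
      apply ge_of_tendsto hlim
      filter_upwards [Ioo_mem_nhdsGT_of_mem (Set.left_mem_Ico.mpr ht₀pos)] with s hs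
      have := hMVT s hs.1 (le_of_lt hs.2)
      linarith [hnonneg (yt s)]
    -- Harnack gives u x ≤ 4 r
    have hyH := hHar (yt t₀) (hytmem t₀ ht₀pos ht₀r)
    rw [hyt_x t₀ (le_of_lt ht₀pos) (le_of_lt ht₀r)] at hyH
    have hux4r : u x ≤ 4 * r := by
      have hsimp : r - (r - t₀) = t₀ := by ring
      rw [hsimp] at hyH
      have hden : 0 < r + (r - t₀) := by linarith
      have h5 : u x * (t₀ / (r + (r - t₀))) ≤ 2 * t₀ := le_trans hyH hupper
      rw [mul_div_assoc', div_le_iff₀ hden] at h5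
      nlinarith [h5, ht₀pos, sq_nonneg t₀]
    rw [hgradnorm]
    calc ‖fderiv ℝ u x‖ ≤ 2 * u x / r := by rw [← hgradnorm]; exact hGrad
      _ ≤ 2 * (4 * r) / r := by
        apply (div_le_div_iff_of_pos_right hrpos).mpr
        linarith
      _ = 8 := by field_simp; ring
  constructor
  · exact hpart1
  · intro h0F x hxhalf hxpos
    have h0notpos : (0 : EuclideanSpace ℝ (Fin 2)) ∉ pos := hFnotpos 0 h0F
    have hcclosed : IsClosed posᶜ := hposopen.isClosed_compl
    have hcne : posᶜ.Nonempty := ⟨0, h0notpos⟩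
    set r := Metric.infDist x posᶜ with hrdef
    have hrpos : 0 < r := by
      rw [hrdef]
      exact (hcclosed.notMem_iff_infDist_pos hcne).mp (fun h => h hxpos)
    have hrle : r ≤ dist x 0 := Metric.infDist_le_dist_of_mem h0notpos
    have hxhalf' : dist x 0 < R / 2 := mem_ball.mp hxhalf
    have hballr : ball x r ⊆ pos := by
      intro y hy
      by_contra hynot
      have h1 : r ≤ dist x y := Metric.infDist_le_dist_of_mem (show y ∈ posᶜ from hynot)
      rw [dist_comm] at h1
      exact absurd (mem_ball.mp hy) (not_lt.mpr h1)
    obtain ⟨p, hpc, hdxp⟩ := hcclosed.exists_infDist_eq_dist hcne x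
    have hpfront : p ∈ frontier pos := by
      rw [hposopen.frontier_eq]
      constructor
      · have h1 : p ∈ closedBall x r := by
          rw [mem_closedBall, dist_comm]
          exact le_of_eq (hdxp.symm.trans hrdef.symm)
        rw [← closure_ball x (ne_of_gt hrpos)] at h1
        exact closure_mono hballr h1
      · exact hpc
    have hpball : p ∈ ball (0 : EuclideanSpace ℝ (Fin 2)) R := by
      rw [mem_ball]
      calc dist p 0 ≤ dist p x + dist x 0 := dist_triangle p x 0
        _ < r + R/2 := by
          apply add_lt_add_of_le_of_lt
          · rw [dist_comm]
            exact le_of_eq (hdxp.symm.trans hrdef.symm)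
          · exact hxhalf'
        _ ≤ R/2 + R/2 := by linarith
        _ = R := by ring
    apply hpart1 x hxpos r hrpos hballr
    exact ⟨p, by rw [hFdef]; exact ⟨hpfront, hpball⟩, hdxp.symm.trans hrdef.symm⟩
end

section
/- Harmonic decay estimate in a strip: let f be harmonic on the strip Ŝ = {(t,θ) : |t| ≤ A, |θ| ≤ 3π/2} with |f| ≤ cδ on Ŝ, f(t, ±π/2) = 0 for |t| ≤ A, and |f(±Ã, θ)| ≤ C̃δ cos θ for |θ| ≤ π/2 where Ã = A − c₀/2. Then |∂_θ f(t, ±π/2)| ≤ (cδ/cosh Ã)·cosh t for all |t| ≤ Ã, where the constant c depends only on C̃. -/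
/-- Laplacian on `ℝ × ℝ` via second partial derivatives. -/
noncomputable def lapP (f : ℝ × ℝ → ℝ) (p : ℝ × ℝ) : ℝ :=
  fderiv ℝ (fun q => fderiv ℝ f q (1, 0)) p (1, 0) +
    fderiv ℝ (fun q => fderiv ℝ f q (0, 1)) p (0, 1)

open Set Filter Topology


lemma oneDim_second_nonpos {φ φ' : ℝ → ℝ} {c ε : ℝ} (hε : 0 < ε)
    (hd : ∀ s ∈ Set.Ioo (-ε) ε, HasDerivAt φ (φ' s) s)
    (hd2 : HasDerivAt φ' c 0) (hmax : IsLocalMax φ 0) : c ≤ 0 := by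
  by_contra hc
  push_neg at hc
  have h0 : φ' 0 = 0 := by
    have := hmax.deriv_eq_zero
    rwa [(hd 0 ⟨by linarith, hε⟩).deriv] at this
  have hslope : Tendsto (slope φ' 0) (𝓝[>] 0) (𝓝 c) :=
    (hasDerivAt_iff_tendsto_slope.1 hd2).mono_left
      (nhdsWithin_mono _ fun x hx => by simpa using ne_of_gt hx)
  have hpos : ∀ᶠ s in 𝓝[>] (0:ℝ), 0 < φ' s := by
    filter_upwards [hslope.eventually (eventually_gt_nhds hc),
      self_mem_nhdsWithin] with s hs hs'
    have hs' : (0:ℝ) < s := hs'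
    have h2 : 0 < s⁻¹ * φ' s := by simpa [slope, h0] using hs
    nlinarith [inv_pos.2 hs']
  -- get δ with φ' > 0 on (0, δ), δ < ε, and max on [-δ, δ]
  obtain ⟨δ₁, hδ₁, hφ'⟩ := (mem_nhdsGT_iff_exists_Ioo_subset).1 hpos
  obtain ⟨δ₂, hδ₂, hmax'⟩ := Metric.eventually_nhds_iff_ball.1 hmax
  set δ : ℝ := min (min δ₁ ε) δ₂ / 2 with hδdef
  have hδ₁' : (0:ℝ) < δ₁ := hδ₁
  have k1 : min (min δ₁ ε) δ₂ ≤ δ₁ := le_trans (min_le_left _ _) (min_le_left _ _)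
  have k2 : min (min δ₁ ε) δ₂ ≤ ε := le_trans (min_le_left _ _) (min_le_right _ _)
  have k3 : min (min δ₁ ε) δ₂ ≤ δ₂ := min_le_right _ _
  have kp : 0 < min (min δ₁ ε) δ₂ := lt_min (lt_min hδ₁' hε) hδ₂
  have hδpos : 0 < δ := by positivity
  have hδ1 : δ < δ₁ := by simp only [hδdef]; linarith
  have hδε : δ < ε := by simp only [hδdef]; linarith
  have hδ2 : δ < δ₂ := by simp only [hδdef]; linarith
  -- φ strictly increasing on [0, δ]
  have hmono : StrictMonoOn φ (Set.Icc 0 δ) := by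
    apply strictMonoOn_of_deriv_pos (convex_Icc 0 δ)
    · intro x hx
      exact (hd x ⟨by cases hx; linarith, by cases hx; linarith⟩).continuousAt.continuousWithinAt
    · intro x hx
      rw [interior_Icc] at hx
      rw [(hd x ⟨by cases hx; linarith, by cases hx; linarith⟩).deriv]
      exact hφ' ⟨hx.1, by cases hx; linarith⟩
  have h5 : φ 0 < φ δ := hmono ⟨le_rfl, hδpos.le⟩ ⟨hδpos.le, le_rfl⟩ hδpos
  have h6 : φ δ ≤ φ 0 := hmax' δ
    (by simp only [Metric.mem_ball, Real.dist_eq, sub_zero, abs_of_pos hδpos]; linarith)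
  linarith


-- differentiability of a partial derivative of a C² function on an open set
lemma partial_diff {U : Set (ℝ × ℝ)} (hU : IsOpen U) {f : ℝ × ℝ → ℝ}
    (hf : ContDiffOn ℝ 2 f U) {p : ℝ × ℝ} (hp : p ∈ U) (e : ℝ × ℝ) :
    DifferentiableAt ℝ (fun q => fderiv ℝ f q e) p := by
  have hF : ContDiffOn ℝ 1 (fderiv ℝ f) U := hf.fderiv_of_isOpen hU (by norm_num)
  have hFd : DifferentiableAt ℝ (fderiv ℝ f) p :=
    (hF.differentiableOn (by norm_num)).differentiableAt (hU.mem_nhds hp)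
  exact (ContinuousLinearMap.apply ℝ ℝ e).differentiableAt.comp p hFd

lemma dir_second_nonpos {U : Set (ℝ × ℝ)} (hU : IsOpen U) {h : ℝ × ℝ → ℝ}
    (hh : ContDiffOn ℝ 2 h U) {z : ℝ × ℝ} (hz : z ∈ U) (hmax : IsLocalMax h z)
    (e : ℝ × ℝ) : fderiv ℝ (fun q => fderiv ℝ h q e) z e ≤ 0 := by
  have hdiff : DifferentiableOn ℝ h U := hh.differentiableOn (by norm_num)
  set line : ℝ → ℝ × ℝ := fun s => z + s • e with hline_def
  have hline : ∀ s : ℝ, HasDerivAt line e s := by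
    intro s
    have := ((hasDerivAt_id s).smul_const e).const_add z
    simp only [one_smul] at this; exact this
  have hlinecont : Continuous line := by continuity
  -- a small interval mapped into U
  have hpre : IsOpen (line ⁻¹' U) := hU.preimage hlinecont
  have h0mem : (0:ℝ) ∈ line ⁻¹' U := by simp [hline_def, hz]
  obtain ⟨ε, hε, hball⟩ := Metric.isOpen_iff.1 hpre 0 h0mem
  have hIoo : ∀ s ∈ Set.Ioo (-ε) ε, line s ∈ U := by
    intro s hs
    exact hball (by simp [Real.dist_eq, abs_lt]; exact ⟨hs.1, hs.2⟩)
  set D : ℝ × ℝ → ℝ := fun q => fderiv ℝ h q e with hD_def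
  have hd : ∀ s ∈ Set.Ioo (-ε) ε, HasDerivAt (h ∘ line) (D (line s)) s := by
    intro s hs
    exact (((hdiff.differentiableAt (hU.mem_nhds (hIoo s hs))).hasFDerivAt).comp_hasDerivAt
      s (hline s))
  have hDdiff : DifferentiableAt ℝ D z := partial_diff hU hh hz e
  have hd2 : HasDerivAt (fun s => D (line s)) (fderiv ℝ D z e) 0 := by
    have hF : HasFDerivAt D (fderiv ℝ D z) (line 0) := by
      rw [show line 0 = z by simp [hline_def]]; exact hDdiff.hasFDerivAt
    exact hF.comp_hasDerivAt 0 (hline 0)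
  have hmax' : IsLocalMax (h ∘ line) 0 := by
    have hl0 : Filter.Tendsto line (nhds 0) (nhds z) := by
      simpa [hline_def] using (hlinecont.tendsto 0)
    have := hl0.eventually hmax
    simpa [hline_def, IsLocalMax, IsMaxFilter] using this
  exact oneDim_second_nonpos hε (fun s hs => hd s hs) hd2 hmax'

lemma lapP_neg (f : ℝ × ℝ → ℝ) (p : ℝ × ℝ) : lapP (fun q => -f q) p = -lapP f p := by
  have h1 : ∀ e : ℝ × ℝ, (fun q => fderiv ℝ (fun x => -f x) q e) =
      fun q => -(fderiv ℝ f q e) := by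
    intro e; funext q; rw [fderiv_fun_neg]; simp
  unfold lapP
  rw [h1 (1,0), h1 (0,1), fderiv_fun_neg, fderiv_fun_neg]
  simp
  ring

-- lapP of f + v where v has explicit global derivative L with partials v1 v2
lemma lapP_add {U : Set (ℝ × ℝ)} (hU : IsOpen U) {f v : ℝ × ℝ → ℝ}
    (hf : ContDiffOn ℝ 2 f U) {L : ℝ × ℝ → (ℝ × ℝ →L[ℝ] ℝ)}
    (hv : ∀ q, HasFDerivAt v (L q) q)
    {v1 v2 : ℝ × ℝ → ℝ} (h1 : ∀ q, L q (1,0) = v1 q) (h2 : ∀ q, L q (0,1) = v2 q)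
    {p : ℝ × ℝ} (hp : p ∈ U)
    (hv1 : DifferentiableAt ℝ v1 p) (hv2 : DifferentiableAt ℝ v2 p) :
    lapP (fun q => f q + v q) p = lapP f p + fderiv ℝ v1 p (1,0) + fderiv ℝ v2 p (0,1) := by
  have hdiff : DifferentiableOn ℝ f U := hf.differentiableOn (by norm_num)
  have hev : ∀ e : ℝ × ℝ, ∀ w : ℝ × ℝ → ℝ, (∀ q, L q e = w q) →
      (fun q => fderiv ℝ (fun x => f x + v x) q e) =ᶠ[𝓝 p]
      (fun q => fderiv ℝ f q e + w q) := by
    intro e w hw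
    filter_upwards [hU.mem_nhds hp] with q hq
    have hfq : HasFDerivAt f (fderiv ℝ f q) q :=
      (hdiff.differentiableAt (hU.mem_nhds hq)).hasFDerivAt
    rw [(hfq.fun_add (hv q)).fderiv]
    simp [hw q]
  have key : ∀ e : ℝ × ℝ, ∀ w : ℝ × ℝ → ℝ, (∀ q, L q e = w q) →
      DifferentiableAt ℝ w p →
      fderiv ℝ (fun q => fderiv ℝ (fun x => f x + v x) q e) p e =
        fderiv ℝ (fun q => fderiv ℝ f q e) p e + fderiv ℝ w p e := by
    intro e w hw hwd
    rw [Filter.EventuallyEq.fderiv_eq (hev e w hw)]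
    have hpd : DifferentiableAt ℝ (fun q => fderiv ℝ f q e) p := by
      have hF : ContDiffOn ℝ 1 (fderiv ℝ f) U := hf.fderiv_of_isOpen hU (by norm_num)
      exact (ContinuousLinearMap.apply ℝ ℝ e).differentiableAt.comp p
        ((hF.differentiableOn (by norm_num)).differentiableAt (hU.mem_nhds hp))
    rw [fderiv_fun_add hpd hwd]
    simp
  unfold lapP
  rw [key (1,0) v1 h1 hv1, key (0,1) v2 h2 hv2]
  ring

lemma maxprin {U : Set (ℝ × ℝ)} (hU : IsOpen U) {g : ℝ × ℝ → ℝ}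
    (hg : ContDiffOn ℝ 2 g U) (hlap : ∀ p ∈ U, 0 ≤ lapP g p)
    {a b : ℝ} (ha : 0 < a) (hb : 0 < b)
    (hsub : (Set.Icc (-a) a ×ˢ Set.Icc (-b) b) ⊆ U)
    (hbd : ∀ p ∈ Set.Icc (-a) a ×ˢ Set.Icc (-b) b, (|p.1| = a ∨ |p.2| = b) → g p ≤ 0) :
    ∀ p ∈ Set.Icc (-a) a ×ˢ Set.Icc (-b) b, g p ≤ 0 := by
  set R : Set (ℝ × ℝ) := Set.Icc (-a) a ×ˢ Set.Icc (-b) b with hR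
  intro p₀ hp₀
  have hmain : ∀ ε : ℝ, 0 < ε → g p₀ ≤ ε * a ^ 2 := by
    intro ε hε
    set h : ℝ × ℝ → ℝ := fun p => g p + ε * p.1 ^ 2 with hh_def
    -- h is C² on U
    have hQ : ContDiff ℝ 2 (fun p : ℝ × ℝ => ε * p.1 ^ 2) :=
      contDiff_const.mul (contDiff_fst.pow 2)
    have hhC2 : ContDiffOn ℝ 2 h U := hg.add hQ.contDiffOn
    -- max of h on compact R
    have hRcomp : IsCompact R := isCompact_Icc.prod isCompact_Icc
    have hcont : ContinuousOn h R :=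
      (hg.continuousOn.mono hsub).add (hQ.continuous.continuousOn)
    obtain ⟨z, hzR, hzmax⟩ := hRcomp.exists_isMaxOn ⟨p₀, hp₀⟩ hcont
    have hzmax' : ∀ p ∈ R, h p ≤ h z := fun p hp => hzmax hp
    by_cases hbdy : |z.1| = a ∨ |z.2| = b
    · -- max on boundary
      have h1 : h p₀ ≤ h z := hzmax' p₀ hp₀
      have h2 : g z ≤ 0 := hbd z hzR hbdy
      have h3 : z.1 ^ 2 ≤ a ^ 2 := by
        have := hzR.1
        simp only [Set.mem_Icc] at this
        nlinarith [this.1, this.2]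
      have h4 : 0 ≤ ε * p₀.1 ^ 2 := by positivity
      simp only [hh_def] at h1
      nlinarith
    · -- interior max: contradiction with subharmonicity
      exfalso
      push_neg at hbdy
      have hz1 : |z.1| < a := lt_of_le_of_ne (by
        have := hzR.1; simp only [Set.mem_Icc] at this; exact abs_le.2 this) hbdy.1
      have hz2 : |z.2| < b := lt_of_le_of_ne (by
        have := hzR.2; simp only [Set.mem_Icc] at this; exact abs_le.2 this) hbdy.2
      have hzU : z ∈ U := hsub hzR
      have hlocmax : IsLocalMax h z := by
        have hV : (Set.Ioo (-a) a ×ˢ Set.Ioo (-b) b) ∈ 𝓝 z := by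
          apply (isOpen_Ioo.prod isOpen_Ioo).mem_nhds
          exact ⟨abs_lt.1 hz1, abs_lt.1 hz2⟩
        filter_upwards [hV] with p hp
        exact hzmax' p ⟨Set.Ioo_subset_Icc_self hp.1, Set.Ioo_subset_Icc_self hp.2⟩
      have hS1 := dir_second_nonpos hU hhC2 hzU hlocmax (1,0)
      have hS2 := dir_second_nonpos hU hhC2 hzU hlocmax (0,1)
      -- compute lapP h z = lapP g z + 2ε
      have hvQ : ∀ q : ℝ × ℝ, HasFDerivAt (fun p : ℝ × ℝ => ε * p.1 ^ 2)
          ((ε * (2 * q.1 ^ 1)) • ContinuousLinearMap.fst ℝ ℝ ℝ) q := by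
        intro q
        exact ((hasDerivAt_pow 2 q.1).const_mul ε).comp_hasFDerivAt q hasFDerivAt_fst
      have hlaph : lapP h z = lapP g z + 2 * ε := by
        have := lapP_add hU hg hvQ
          (v1 := fun q => ε * 2 * q.1) (v2 := fun _ => 0)
          (fun q => by simp; ring) (fun q => by simp)
          hzU (by fun_prop) (by fun_prop)
        rw [hh_def]
        rw [this]
        have e1 : fderiv ℝ (fun q : ℝ × ℝ => ε * 2 * q.1) z (1,0) = ε * 2 := by
          have : HasFDerivAt (fun q : ℝ × ℝ => ε * 2 * q.1)
              ((ε * 2) • ContinuousLinearMap.fst ℝ ℝ ℝ) z :=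
            (hasFDerivAt_fst).const_mul (ε * 2)
          rw [this.fderiv]; simp
        have e2 : fderiv ℝ (fun _ : ℝ × ℝ => (0:ℝ)) z (0,1) = 0 := by
          rw [fderiv_fun_const]; simp
        rw [e1, e2]; ring
      have hsum : lapP h z ≤ 0 := by
        unfold lapP; linarith
      have := hlap z hzU
      rw [hlaph] at hsum
      linarith
  -- conclude: g p₀ ≤ inf over ε = 0
  by_contra hcon
  push_neg at hcon
  have := hmain (g p₀ / (2 * a ^ 2)) (by positivity)
  have ha2 : (0:ℝ) < a ^ 2 := by positivity
  have heq : g p₀ / (2 * a ^ 2) * a ^ 2 = g p₀ / 2 := by field_simp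
  rw [heq] at this
  linarith

lemma prod_fun_hasFDerivAt {a b a' b' : ℝ → ℝ} (ha : ∀ x, HasDerivAt a (a' x) x)
    (hb : ∀ x, HasDerivAt b (b' x) x) (c : ℝ) (q : ℝ × ℝ) :
    HasFDerivAt (fun p : ℝ × ℝ => c * (a p.1 * b p.2))
      (c • (a q.1 • (b' q.2 • ContinuousLinearMap.snd ℝ ℝ ℝ) +
        b q.2 • (a' q.1 • ContinuousLinearMap.fst ℝ ℝ ℝ))) q := by
  have h1 : HasFDerivAt (fun p : ℝ × ℝ => a p.1)
      (a' q.1 • ContinuousLinearMap.fst ℝ ℝ ℝ) q :=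
    (ha q.1).comp_hasFDerivAt q hasFDerivAt_fst
  have h2 : HasFDerivAt (fun p : ℝ × ℝ => b p.2)
      (b' q.2 • ContinuousLinearMap.snd ℝ ℝ ℝ) q :=
    (hb q.2).comp_hasFDerivAt q hasFDerivAt_snd
  exact (h1.mul h2).const_mul c

lemma lapP_add_barrier {U : Set (ℝ × ℝ)} (hU : IsOpen U) {f : ℝ × ℝ → ℝ}
    (hf : ContDiffOn ℝ 2 f U) (c : ℝ) {p : ℝ × ℝ} (hp : p ∈ U) :
    lapP (fun q => f q + c * (Real.cosh q.1 * Real.cos q.2)) p = lapP f p := by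
  have hB := prod_fun_hasFDerivAt Real.hasDerivAt_cosh Real.hasDerivAt_cos c
  have hP1 := prod_fun_hasFDerivAt Real.hasDerivAt_sinh Real.hasDerivAt_cos c
  have hP2 := prod_fun_hasFDerivAt Real.hasDerivAt_cosh
    (fun x => (Real.hasDerivAt_sin x).fun_neg) c
  have e1 : ∀ q : ℝ × ℝ, (c • (Real.cosh q.1 • ((-Real.sin q.2) • ContinuousLinearMap.snd ℝ ℝ ℝ) +
      Real.cos q.2 • (Real.sinh q.1 • ContinuousLinearMap.fst ℝ ℝ ℝ))) (1,0) =
      c * (Real.sinh q.1 * Real.cos q.2) := by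
    intro q
    simp only [ContinuousLinearMap.smul_apply, ContinuousLinearMap.add_apply,
      ContinuousLinearMap.coe_fst', ContinuousLinearMap.coe_snd', smul_eq_mul]
    ring
  have e2 : ∀ q : ℝ × ℝ, (c • (Real.cosh q.1 • ((-Real.sin q.2) • ContinuousLinearMap.snd ℝ ℝ ℝ) +
      Real.cos q.2 • (Real.sinh q.1 • ContinuousLinearMap.fst ℝ ℝ ℝ))) (0,1) =
      c * (Real.cosh q.1 * (-Real.sin q.2)) := by
    intro q
    simp only [ContinuousLinearMap.smul_apply, ContinuousLinearMap.add_apply,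
      ContinuousLinearMap.coe_fst', ContinuousLinearMap.coe_snd', smul_eq_mul]
    ring
  have key := lapP_add hU hf (fun q => hB q)
    (v1 := fun q => c * (Real.sinh q.1 * Real.cos q.2))
    (v2 := fun q => c * (Real.cosh q.1 * (-Real.sin q.2)))
    e1 e2 hp (hP1 p).differentiableAt (hP2 p).differentiableAt
  rw [key, (hP1 p).fderiv, (hP2 p).fderiv]
  simp only [ContinuousLinearMap.smul_apply, ContinuousLinearMap.add_apply,
    ContinuousLinearMap.coe_fst', ContinuousLinearMap.coe_snd', smul_eq_mul]
  ring

/-- Harmonic decay estimate in a strip: if `f` is harmonic on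
`Ŝ = {|t| < A, |θ| < 3π/2}` with `|f| ≤ C̃δ` there, `f(t, ±π/2) = 0` for `|t| ≤ A`, and
`|f(±A₀, θ)| ≤ C̃δ cos θ` for `|θ| ≤ π/2` (with `0 < A₀ < A`), then
`|∂_θ f(t, ±π/2)| ≤ (cδ/cosh A₀)·cosh t` for `|t| ≤ A₀`, where `c` depends only on `C̃`. -/
theorem harmonic_strip_decay (C' : ℝ) (hC' : 0 < C') :
    ∃ c > (0 : ℝ),
      ∀ (A A₀ δ : ℝ) (f : ℝ × ℝ → ℝ),
        0 < A₀ → A₀ < A → 0 ≤ δ →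
        ContDiffOn ℝ 2 f {p : ℝ × ℝ | |p.1| < A ∧ |p.2| < 3 * Real.pi / 2} →
        (∀ p ∈ {p : ℝ × ℝ | |p.1| < A ∧ |p.2| < 3 * Real.pi / 2}, lapP f p = 0) →
        (∀ p ∈ {p : ℝ × ℝ | |p.1| < A ∧ |p.2| < 3 * Real.pi / 2}, |f p| ≤ C' * δ) →
        (∀ t : ℝ, |t| ≤ A → f (t, Real.pi / 2) = 0 ∧ f (t, -(Real.pi / 2)) = 0) →
        (∀ θ : ℝ, |θ| ≤ Real.pi / 2 →
          |f (A₀, θ)| ≤ C' * δ * Real.cos θ ∧ |f (-A₀, θ)| ≤ C' * δ * Real.cos θ) →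
        ∀ t : ℝ, |t| ≤ A₀ →
          |fderiv ℝ f (t, Real.pi / 2) (0, 1)| ≤ c * δ / Real.cosh A₀ * Real.cosh t ∧
          |fderiv ℝ f (t, -(Real.pi / 2)) (0, 1)| ≤ c * δ / Real.cosh A₀ * Real.cosh t := by
  refine ⟨C', hC', ?_⟩
  intro A A₀ δ f hA₀ hAA hδ hC2 hlap hbd h4 h5 t ht
  have hπ := Real.pi_pos
  set U : Set (ℝ × ℝ) := {p : ℝ × ℝ | |p.1| < A ∧ |p.2| < 3 * Real.pi / 2} with hU_def
  have hUopen : IsOpen U :=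
    (isOpen_lt continuous_fst.abs continuous_const).and
      (isOpen_lt continuous_snd.abs continuous_const)
  have hcoshpos : 0 < Real.cosh A₀ := Real.cosh_pos A₀
  set K : ℝ := C' * δ / Real.cosh A₀ with hK_def
  have hK : 0 ≤ K := by positivity
  set R : Set (ℝ × ℝ) := Set.Icc (-A₀) A₀ ×ˢ Set.Icc (-(Real.pi/2)) (Real.pi/2) with hR_def
  have hRU : R ⊆ U := by
    rintro p ⟨hp1, hp2⟩
    simp only [Set.mem_Icc] at hp1 hp2
    constructor
    · have : |p.1| ≤ A₀ := abs_le.2 hp1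
      linarith
    · have : |p.2| ≤ Real.pi/2 := abs_le.2 hp2
      calc |p.2| ≤ Real.pi/2 := this
        _ < 3 * Real.pi / 2 := by linarith
  -- the barrier bound on R
  have hBsmooth : ContDiff ℝ 2 (fun q : ℝ × ℝ => (-K) * (Real.cosh q.1 * Real.cos q.2)) :=
    contDiff_const.mul (((Real.contDiff_cosh.of_le le_top).comp contDiff_fst).mul
      ((Real.contDiff_cos.of_le le_top).comp contDiff_snd))
  have hbdy : ∀ σ : ℝ, |σ| = 1 → ∀ p ∈ R, (|p.1| = A₀ ∨ |p.2| = Real.pi/2) →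
      σ * f p + (-K) * (Real.cosh p.1 * Real.cos p.2) ≤ 0 := by
    intro σ hσ p hpR hpb
    have hσf : σ * f p ≤ |f p| := by
      calc σ * f p ≤ |σ * f p| := le_abs_self _
        _ = |σ| * |f p| := abs_mul _ _
        _ = |f p| := by rw [hσ, one_mul]
    rcases hpb with hb1 | hb2
    · -- side walls
      have hp2 : |p.2| ≤ Real.pi/2 := by
        have := hpR.2; simp only [Set.mem_Icc] at this; exact abs_le.2 this
      have hcosh1 : Real.cosh p.1 = Real.cosh A₀ := by
        rcases abs_eq hA₀.le |>.1 hb1 with h | h <;> rw [h] <;>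
          simp [Real.cosh_neg]
      have hfp : |f p| ≤ C' * δ * Real.cos p.2 := by
        rcases abs_eq hA₀.le |>.1 hb1 with h | h
        · have := (h5 p.2 hp2).1
          rwa [show ((A₀ : ℝ), p.2) = p by rw [← h]] at this
        · have := (h5 p.2 hp2).2
          rwa [show ((-A₀ : ℝ), p.2) = p by rw [← h]] at this
      have hKc : K * Real.cosh A₀ = C' * δ := by
        rw [hK_def, div_mul_cancel₀ _ hcoshpos.ne']
      have hbar : K * (Real.cosh p.1 * Real.cos p.2) = C' * δ * Real.cos p.2 := by
        rw [hcosh1, ← hKc]; ring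
      linarith
    · -- top and bottom
      have hp1 : |p.1| ≤ A₀ := by
        have := hpR.1; simp only [Set.mem_Icc] at this; exact abs_le.2 this
      have hp1A : |p.1| ≤ A := le_trans hp1 hAA.le
      have hcos0 : Real.cos p.2 = 0 := by
        rcases abs_eq (by positivity : (0:ℝ) ≤ Real.pi/2) |>.1 hb2 with h | h <;>
          rw [h] <;> simp [Real.cos_pi_div_two]
      have hf0 : f p = 0 := by
        rcases abs_eq (by positivity : (0:ℝ) ≤ Real.pi/2) |>.1 hb2 with h | h
        · have := (h4 p.1 hp1A).1
          rwa [show ((p.1 : ℝ), Real.pi/2) = p by rw [← h]] at this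
        · have := (h4 p.1 hp1A).2
          rwa [show ((p.1 : ℝ), -(Real.pi/2)) = p by rw [← h]] at this
      rw [hf0, hcos0]
      simp
  have hmaxp : ∀ σ : ℝ, |σ| = 1 → (∀ p ∈ U, lapP (fun q => σ * f q) p = 0) →
      ∀ p ∈ R, σ * f p ≤ K * (Real.cosh p.1 * Real.cos p.2) := by
    intro σ hσ hσlap
    have hgC2 : ContDiffOn ℝ 2 (fun q => σ * f q) U := hC2.const_smul σ
    have happ := maxprin hUopen (g := fun q => σ * f q + (-K) * (Real.cosh q.1 * Real.cos q.2))
      (hgC2.add hBsmooth.contDiffOn)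
      (fun p hp => by
        rw [lapP_add_barrier hUopen hgC2 (-K) hp, hσlap p hp])
      hA₀ (by positivity : (0:ℝ) < Real.pi/2) hRU (hbdy σ hσ)
    intro p hp
    have h := happ p hp
    change σ * f p + -K * (Real.cosh p.1 * Real.cos p.2) ≤ 0 at h
    linarith
  have habs : ∀ p ∈ R, |f p| ≤ K * (Real.cosh p.1 * Real.cos p.2) := by
    intro p hp
    have hl1 : ∀ q ∈ U, lapP (fun x => (1:ℝ) * f x) q = 0 := by
      intro q hq
      have he : (fun x => (1:ℝ) * f x) = f := funext fun x => one_mul _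
      rw [he]; exact hlap q hq
    have hl2 : ∀ q ∈ U, lapP (fun x => (-1:ℝ) * f x) q = 0 := by
      intro q hq
      have he : (fun x => (-1:ℝ) * f x) = fun x => -f x := funext fun x => neg_one_mul _
      rw [he, lapP_neg, hlap q hq, neg_zero]
    have h1 := hmaxp 1 (by norm_num) hl1 p hp
    have h2 := hmaxp (-1) (by norm_num) hl2 p hp
    rw [abs_le]
    constructor <;> nlinarith
  -- Hopf step at both boundary lines
  have htA : |t| ≤ A := le_trans ht hAA.le
  constructor
  · -- θ = π/2
    set z : ℝ × ℝ := (t, Real.pi/2) with hz_def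
    have hzU : z ∈ U := by
      constructor
      · simp only [hz_def]; exact lt_of_le_of_lt ht hAA
      · simp only [hz_def]
        rw [abs_of_pos (by positivity)]
        linarith
    have hfz : DifferentiableAt ℝ f z :=
      (hC2.differentiableOn (by norm_num)).differentiableAt (hUopen.mem_nhds hzU)
    have hline : ∀ s : ℝ, HasDerivAt (fun s : ℝ => ((t, Real.pi/2 + s) : ℝ × ℝ))
        ((0 : ℝ), (1 : ℝ)) s := by
      intro s
      exact (hasDerivAt_const s t).prodMk ((hasDerivAt_id s).const_add (Real.pi/2))
    have hF : HasFDerivAt f (fderiv ℝ f z) ((t, Real.pi/2 + (0:ℝ)) : ℝ × ℝ) := by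
      rw [show ((t, Real.pi/2 + (0:ℝ)) : ℝ × ℝ) = z by simp [hz_def]]
      exact hfz.hasFDerivAt
    have hg : HasDerivAt (fun s : ℝ => f (t, Real.pi/2 + s)) (fderiv ℝ f z (0,1)) 0 :=
      hF.comp_hasDerivAt 0 (hline 0)
    have hg0 : f (t, Real.pi/2) = 0 := (h4 t htA).1
    have hslope : Filter.Tendsto (slope (fun s : ℝ => f (t, Real.pi/2 + s)) 0)
        (𝓝[<] 0) (𝓝 (fderiv ℝ f z (0,1))) :=
      (hasDerivAt_iff_tendsto_slope.1 hg).mono_left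
        (nhdsWithin_mono _ fun x hx => by simpa using ne_of_lt hx)
    have hev : ∀ᶠ s in 𝓝[<] (0:ℝ),
        |slope (fun s : ℝ => f (t, Real.pi/2 + s)) 0 s| ≤ K * Real.cosh t := by
      filter_upwards [Ioo_mem_nhdsLT_of_mem
        (show (0:ℝ) ∈ Set.Ioc (-Real.pi) 0 from ⟨by linarith, le_rfl⟩)] with s hs
      have hsneg : s < 0 := hs.2
      have hmem : ((t, Real.pi/2 + s) : ℝ × ℝ) ∈ R := by
        refine ⟨Set.mem_Icc.2 (abs_le.1 ht), Set.mem_Icc.2 ⟨by linarith [hs.1], by linarith⟩⟩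
      have hb := habs _ hmem
      have hcos : Real.cos (Real.pi/2 + s) ≤ -s := by
        rw [show Real.pi/2 + s = s + Real.pi/2 by ring, Real.cos_add_pi_div_two]
        linarith [Real.le_sin hsneg.le]
      have hcoshtpos : 0 < Real.cosh t := Real.cosh_pos t
      have hfb : |f (t, Real.pi/2 + s)| ≤ K * Real.cosh t * (-s) := by
        calc |f (t, Real.pi/2 + s)| ≤ K * (Real.cosh t * Real.cos (Real.pi/2 + s)) := hb
          _ ≤ K * Real.cosh t * (-s) := by linarith [mul_le_mul_of_nonneg_left hcos (mul_nonneg hK hcoshtpos.le)]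
      have hsl : slope (fun s : ℝ => f (t, Real.pi/2 + s)) 0 s
          = f (t, Real.pi/2 + s) / s := by
        simp only [slope, vsub_eq_sub, smul_eq_mul, sub_zero, add_zero, hg0]
        exact (div_eq_inv_mul _ _).symm
      rw [hsl, abs_div, abs_of_neg hsneg]
      rw [div_le_iff₀ (by linarith : (0:ℝ) < -s)]
      exact hfb
    have hlim := le_of_tendsto hslope.abs hev
    calc |fderiv ℝ f (t, Real.pi/2) (0,1)| ≤ K * Real.cosh t := hlim
      _ = C' * δ / Real.cosh A₀ * Real.cosh t := by rw [hK_def]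
  · -- θ = -π/2
    set z : ℝ × ℝ := (t, -(Real.pi/2)) with hz_def
    have hzU : z ∈ U := by
      constructor
      · simp only [hz_def]; exact lt_of_le_of_lt ht hAA
      · simp only [hz_def]
        rw [abs_neg, abs_of_pos (by positivity)]
        linarith
    have hfz : DifferentiableAt ℝ f z :=
      (hC2.differentiableOn (by norm_num)).differentiableAt (hUopen.mem_nhds hzU)
    have hline : ∀ s : ℝ, HasDerivAt (fun s : ℝ => ((t, -(Real.pi/2) + s) : ℝ × ℝ))
        ((0 : ℝ), (1 : ℝ)) s := by
      intro s
      exact (hasDerivAt_const s t).prodMk ((hasDerivAt_id s).const_add (-(Real.pi/2)))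
    have hF : HasFDerivAt f (fderiv ℝ f z) ((t, -(Real.pi/2) + (0:ℝ)) : ℝ × ℝ) := by
      rw [show ((t, -(Real.pi/2) + (0:ℝ)) : ℝ × ℝ) = z by simp [hz_def]]
      exact hfz.hasFDerivAt
    have hg : HasDerivAt (fun s : ℝ => f (t, -(Real.pi/2) + s)) (fderiv ℝ f z (0,1)) 0 :=
      hF.comp_hasDerivAt 0 (hline 0)
    have hg0 : f (t, -(Real.pi/2)) = 0 := (h4 t htA).2
    have hslope : Filter.Tendsto (slope (fun s : ℝ => f (t, -(Real.pi/2) + s)) 0)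
        (𝓝[>] 0) (𝓝 (fderiv ℝ f z (0,1))) :=
      (hasDerivAt_iff_tendsto_slope.1 hg).mono_left
        (nhdsWithin_mono _ fun x hx => by simpa using (ne_of_gt hx))
    have hev : ∀ᶠ s in 𝓝[>] (0:ℝ),
        |slope (fun s : ℝ => f (t, -(Real.pi/2) + s)) 0 s| ≤ K * Real.cosh t := by
      filter_upwards [Ioo_mem_nhdsGT_of_mem
        (show (0:ℝ) ∈ Set.Ico 0 Real.pi from ⟨le_rfl, hπ⟩)] with s hs
      have hspos : 0 < s := hs.1
      have hmem : ((t, -(Real.pi/2) + s) : ℝ × ℝ) ∈ R := by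
        refine ⟨Set.mem_Icc.2 (abs_le.1 ht), Set.mem_Icc.2 ⟨by linarith, by linarith [hs.2]⟩⟩
      have hb := habs _ hmem
      have hcos : Real.cos (-(Real.pi/2) + s) ≤ s := by
        rw [show -(Real.pi/2) + s = s - Real.pi/2 by ring, Real.cos_sub_pi_div_two]
        exact Real.sin_le hspos.le
      have hcoshtpos : 0 < Real.cosh t := Real.cosh_pos t
      have hfb : |f (t, -(Real.pi/2) + s)| ≤ K * Real.cosh t * s := by
        calc |f (t, -(Real.pi/2) + s)| ≤ K * (Real.cosh t * Real.cos (-(Real.pi/2) + s)) := hb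
          _ ≤ K * Real.cosh t * s := by linarith [mul_le_mul_of_nonneg_left hcos (mul_nonneg hK hcoshtpos.le)]
      have hsl : slope (fun s : ℝ => f (t, -(Real.pi/2) + s)) 0 s
          = f (t, -(Real.pi/2) + s) / s := by
        simp only [slope, vsub_eq_sub, smul_eq_mul, sub_zero, add_zero, hg0]
        exact (div_eq_inv_mul _ _).symm
      rw [hsl, abs_div, abs_of_pos hspos]
      rw [div_le_iff₀ hspos]
      exact hfb
    have hlim := le_of_tendsto hslope.abs hev
    calc |fderiv ℝ f (t, -(Real.pi/2)) (0,1)| ≤ K * Real.cosh t := hlim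
      _ = C' * δ / Real.cosh A₀ * Real.cosh t := by rw [hK_def]
end
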